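/- arXiv:2602.23081 — 5 statements merged into one kernel-verified Lean document; each statement's English description precedes it below -/
import Mathlib

section
/- Let w > 0 and l > 0 be real constants and let μ₀ be a finite Borel measure on ℝ supported in [0,l]. Let T₀(μ₀) be the finite Borel measure on ℝ² obtained by restricting the product measure μ₀ ⊗ Leb (Leb being Lebesgue measure on ℝ) to the set {(y,t) : 0 ≤ t and y + t·w ≤ l} and pushing it forward under the map (y,t) ↦ (y + t·w, t). Then for every continuously differentiable compactly supported function φ : ℝ² → ℝ, ∫_{ℝ²} ( ∂_tφ(x,t) + w·∂_xφ(x,t) ) dT₀(μ₀)(x,t) = ∫_ℝ ( φ(l, (l − y)/w) − φ(y, 0) ) dμ₀(y). -/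
open MeasureTheory

/-- Initial-datum component of the verification in the proof of Theorem 3.2
(Appendix A): the interior transport measure `T₀(μ₀)` from an initial datum
`μ₀` supported in `[0,l]`, paired against `∂_tφ + w ∂_xφ`, produces the
boundary terms `∫ (φ(l, (l−y)/w) − φ(y,0)) dμ₀(y)`. -/
theorem transport_initial_datum (w l : ℝ) (hw : 0 < w) (hl : 0 < l)
    (μ₀ : Measure ℝ) [IsFiniteMeasure μ₀]
    (hsupp : μ₀ ((Set.Icc (0 : ℝ) l)ᶜ) = 0) :
    ∀ φ : ℝ × ℝ → ℝ, ContDiff ℝ 1 φ → HasCompactSupport φ →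
      ∫ p, (fderiv ℝ φ p (0, 1) + w * fderiv ℝ φ p (1, 0))
          ∂(Measure.map (fun p : ℝ × ℝ => (p.1 + p.2 * w, p.2))
              ((μ₀.prod volume).restrict
                {p : ℝ × ℝ | 0 ≤ p.2 ∧ p.1 + p.2 * w ≤ l}))
        = ∫ y, (φ (l, (l - y) / w) - φ (y, 0)) ∂μ₀ := by
  intro φ hφ hφc
  -- the shear map as a homeomorphism
  let G : (ℝ × ℝ) ≃ₜ (ℝ × ℝ) :=
    { toFun := fun p => (p.1 + p.2 * w, p.2)
      invFun := fun p => (p.1 - p.2 * w, p.2)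
      left_inv := fun p => by simp
      right_inv := fun p => by simp
      continuous_toFun :=
        (continuous_fst.add (continuous_snd.mul continuous_const)).prodMk
          continuous_snd
      continuous_invFun :=
        (continuous_fst.sub (continuous_snd.mul continuous_const)).prodMk
          continuous_snd }
  have hg : Continuous (fun p : ℝ × ℝ => (p.1 + p.2 * w, p.2)) :=
    G.continuous_toFun
  set f : ℝ × ℝ → ℝ := fun p => fderiv ℝ φ p (0, 1) + w * fderiv ℝ φ p (1, 0)
    with hf_def
  have hfderiv_cont : Continuous (fderiv ℝ φ) := hφ.continuous_fderiv one_ne_zero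
  have hev : ∀ v : ℝ × ℝ, Continuous (fun p : ℝ × ℝ => fderiv ℝ φ p v) := by
    intro v
    exact hfderiv_cont.clm_apply continuous_const
  have hf_cont : Continuous f := (hev (0, 1)).add (continuous_const.mul (hev (1, 0)))
  have hfd_supp : HasCompactSupport (fderiv ℝ φ) := (HasCompactSupport.fderiv (𝕜 := ℝ) hφc)
  have hf_supp : HasCompactSupport f := by
    apply HasCompactSupport.intro hfd_supp
    intro p hp
    have h0 : fderiv ℝ φ p = 0 := image_eq_zero_of_notMem_tsupport hp
    simp [hf_def, h0]
  have hfg_supp : HasCompactSupport (fun p : ℝ × ℝ => f (p.1 + p.2 * w, p.2)) :=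
    hf_supp.comp_homeomorph G
  -- the set
  set S : Set (ℝ × ℝ) := {p : ℝ × ℝ | 0 ≤ p.2 ∧ p.1 + p.2 * w ≤ l} with hS_def
  have hS_meas : MeasurableSet S := by
    apply MeasurableSet.inter
    · exact measurableSet_le measurable_const measurable_snd
    · exact measurableSet_le
        (measurable_fst.add (measurable_snd.mul measurable_const))
        measurable_const
  -- step 1: unfold the pushforward
  rw [integral_map hg.aemeasurable hf_cont.aestronglyMeasurable]
  -- step 2: restrict → indicator
  rw [← integral_indicator hS_meas]
  -- integrability
  have hFG_int : Integrable (fun p : ℝ × ℝ => f (p.1 + p.2 * w, p.2))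
      (μ₀.prod volume) :=
    (hf_cont.comp hg).integrable_of_hasCompactSupport hfg_supp
  have h_int : Integrable
      (S.indicator (fun p : ℝ × ℝ => f (p.1 + p.2 * w, p.2))) (μ₀.prod volume) :=
    hFG_int.indicator hS_meas
  -- step 3: Fubini
  have hfub :
      ∫ p, S.indicator (fun p : ℝ × ℝ => f (p.1 + p.2 * w, p.2)) p ∂(μ₀.prod volume)
        = ∫ y, (∫ t, S.indicator (fun p : ℝ × ℝ => f (p.1 + p.2 * w, p.2)) (y, t)
            ∂volume) ∂μ₀ :=
    integral_prod _ h_int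
  rw [hfub]
  -- step 4: inner integral, a.e. y
  apply integral_congr_ae
  have hae : ∀ᵐ y ∂μ₀, y ∈ Set.Icc (0 : ℝ) l := by
    rw [ae_iff]
    exact hsupp
  filter_upwards [hae] with y hy
  obtain ⟨hy0, hyl⟩ := hy
  set b : ℝ := (l - y) / w with hb_def
  have hb0 : 0 ≤ b := div_nonneg (by linarith) hw.le
  -- slice identity
  have hslice : ∀ t : ℝ,
      S.indicator (fun p : ℝ × ℝ => f (p.1 + p.2 * w, p.2)) (y, t)
      = (Set.Icc 0 b).indicator (fun t => f (y + t * w, t)) t := by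
    intro t
    by_cases ht : (y, t) ∈ S
    · have ht' : t ∈ Set.Icc 0 b := by
        obtain ⟨h1, h2⟩ := ht
        exact ⟨h1, by rw [hb_def, le_div_iff₀ hw]; linarith⟩
      rw [Set.indicator_of_mem ht, Set.indicator_of_mem ht']
    · have ht' : t ∉ Set.Icc 0 b := by
        intro ⟨h1, h2⟩
        apply ht
        refine ⟨h1, ?_⟩
        rw [hb_def, le_div_iff₀ hw] at h2
        show y + t * w ≤ l
        linarith
      rw [Set.indicator_of_notMem ht, Set.indicator_of_notMem ht']
  simp only [hslice]
  rw [integral_indicator measurableSet_Icc]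
  -- FTC
  have hderiv : ∀ t ∈ Set.uIcc (0 : ℝ) b,
      HasDerivAt (fun t => φ (y + t * w, t)) (f (y + t * w, t)) t := by
    intro t _
    have h1 : HasDerivAt (fun s : ℝ => y + s * w) w t := by
      simpa using ((hasDerivAt_id t).mul_const w).const_add y
    have hc : HasDerivAt (fun s : ℝ => ((y + s * w, s) : ℝ × ℝ))
        ((w, 1) : ℝ × ℝ) t := h1.prodMk (hasDerivAt_id t)
    have hdφ : HasFDerivAt φ
        (fderiv ℝ φ ((fun s : ℝ => ((y + s * w, s) : ℝ × ℝ)) t))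
        ((fun s : ℝ => ((y + s * w, s) : ℝ × ℝ)) t) :=
      (hφ.differentiable one_ne_zero _).hasFDerivAt
    have hd := HasFDerivAt.comp_hasDerivAt_of_eq (x := t) (hl := hdφ) (hf := hc) (hy := rfl)
    have hval : f (y + t * w, t) = fderiv ℝ φ (y + t * w, t) ((w, 1) : ℝ × ℝ) := by
      have hvec : ((w, 1) : ℝ × ℝ) = (0, 1) + w • ((1, 0) : ℝ × ℝ) := by
        simp [Prod.ext_iff]
      rw [hvec, ContinuousLinearMap.map_add, ContinuousLinearMap.map_smul]
      simp [hf_def, smul_eq_mul]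
    rw [hval]
    exact hd
  have hcont : IntervalIntegrable (fun t => f (y + t * w, t)) volume 0 b := by
    apply Continuous.intervalIntegrable
    exact hf_cont.comp
      ((continuous_const.add (continuous_id.mul continuous_const)).prodMk
        continuous_id)
  have hFTC := intervalIntegral.integral_eq_sub_of_hasDerivAt hderiv hcont
  have hIcc : ∫ t in Set.Icc 0 b, f (y + t * w, t)
      = ∫ t in (0:ℝ)..b, f (y + t * w, t) := by
    rw [intervalIntegral.integral_of_le hb0, integral_Icc_eq_integral_Ioc]
  rw [hIcc, hFTC]
  have hbw : y + b * w = l := by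
    rw [hb_def, div_mul_cancel₀ _ hw.ne']
    ring
  rw [hbw]
  simp
end

section
/- Let w > 0 and l > 0 be real constants and let μ be a finite Borel measure on ℝ supported in [0,∞). Let T_b(μ) be the finite Borel measure on ℝ² obtained by restricting the product measure μ ⊗ Leb (Leb being Lebesgue measure on ℝ) to the set {(s,t) : s ≤ t ≤ s + l/w} and pushing it forward under the map (s,t) ↦ ((t − s)·w, t). Then for every continuously differentiable compactly supported function φ : ℝ² → ℝ, ∫_{ℝ²} ( ∂_tφ(x,t) + w·∂_xφ(x,t) ) dT_b(μ)(x,t) = ∫_ℝ ( φ(l, s + l/w) − φ(0, s) ) dμ(s). -/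
open MeasureTheory

/-- Boundary-datum component of the verification in the proof of Theorem 3.2
(Appendix A): the interior transport measure `T_b(μ)` from a boundary datum
`μ` supported in `[0,∞)`, paired against `∂_tφ + w ∂_xφ`, produces the
boundary terms `∫ (φ(l, s + l/w) − φ(0, s)) dμ(s)`. -/
theorem transport_boundary_datum (w l : ℝ) (hw : 0 < w) (hl : 0 < l)
    (μ : Measure ℝ) [IsFiniteMeasure μ]
    (hsupp : μ ((Set.Ici (0 : ℝ))ᶜ) = 0) :
    ∀ φ : ℝ × ℝ → ℝ, ContDiff ℝ 1 φ → HasCompactSupport φ →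
      ∫ p, (fderiv ℝ φ p (0, 1) + w * fderiv ℝ φ p (1, 0))
          ∂(Measure.map (fun p : ℝ × ℝ => ((p.2 - p.1) * w, p.2))
              ((μ.prod volume).restrict
                {p : ℝ × ℝ | p.1 ≤ p.2 ∧ p.2 ≤ p.1 + l / w}))
        = ∫ s, (φ (l, s + l / w) - φ (0, s)) ∂μ := by
  intro φ hφ hcs
  have hw' : w ≠ 0 := ne_of_gt hw
  have hlw : 0 ≤ l / w := le_of_lt (div_pos hl hw)
  set m : ℝ × ℝ → ℝ × ℝ := fun p => ((p.2 - p.1) * w, p.2) with hm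
  have hmc : Continuous m := by fun_prop
  set g : ℝ × ℝ → ℝ := fun p => fderiv ℝ φ p (0, 1) + w * fderiv ℝ φ p (1, 0) with hgdef
  have h1 : Continuous (fderiv ℝ φ) := hφ.continuous_fderiv one_ne_zero
  have hgc : Continuous g :=
    (h1.clm_apply continuous_const).add (continuous_const.mul (h1.clm_apply continuous_const))
  have hgcs : HasCompactSupport g := by
    have hf : HasCompactSupport (fderiv ℝ φ) := hcs.fderiv ℝ
    have heq : g = (fun u : ℝ × ℝ →L[ℝ] ℝ => u (0, 1) + w * u (1, 0)) ∘ (fderiv ℝ φ) := rfl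
    rw [heq]
    exact hf.comp_left (by simp)
  have hS : MeasurableSet {p : ℝ × ℝ | p.1 ≤ p.2 ∧ p.2 ≤ p.1 + l / w} := by
    exact (measurableSet_le measurable_fst measurable_snd).inter
      (measurableSet_le measurable_snd (measurable_fst.add_const _))
  -- m is a homeomorphism
  let e : ℝ × ℝ ≃ₜ ℝ × ℝ :=
    { toFun := m
      invFun := fun q => (q.2 - q.1 / w, q.2)
      left_inv := by
        intro p
        simp only [hm]
        ext <;> field_simp <;> ring
      right_inv := by
        intro q
        simp only [hm]
        ext <;> field_simp <;> ring
      continuous_toFun := hmc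
      continuous_invFun := by fun_prop }
  have hgm_cs : HasCompactSupport (g ∘ m) := hgcs.comp_homeomorph e
  have hint : Integrable (fun x => g (m x)) (μ.prod volume) :=
    (hgc.comp hmc).integrable_of_hasCompactSupport hgm_cs
  rw [MeasureTheory.integral_map hmc.aemeasurable hgc.aestronglyMeasurable]
  rw [← MeasureTheory.integral_indicator hS]
  rw [MeasureTheory.integral_prod _ (hint.indicator hS)]
  refine MeasureTheory.integral_congr_ae (Filter.Eventually.of_forall fun s => ?_)
  dsimp only
  have hind : (fun t => Set.indicator {p : ℝ × ℝ | p.1 ≤ p.2 ∧ p.2 ≤ p.1 + l / w}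
        (fun x => g (m x)) (s, t))
      = Set.indicator (Set.Icc s (s + l / w)) (fun t => g (m (s, t))) := by
    funext t
    simp only [Set.indicator_apply, Set.mem_setOf_eq, Set.mem_Icc]
  rw [hind, MeasureTheory.integral_indicator measurableSet_Icc,
    MeasureTheory.integral_Icc_eq_integral_Ioc,
    ← intervalIntegral.integral_of_le (by linarith : s ≤ s + l / w)]
  have key : ∀ t ∈ Set.uIcc s (s + l / w),
      HasDerivAt (fun t => φ ((t - s) * w, t)) (g (m (s, t))) t := by
    intro t _
    have h1' : HasDerivAt (fun t : ℝ => ((t - s) * w, t)) (w, 1) t := by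
      have ha : HasDerivAt (fun t : ℝ => (t - s) * w) w t := by
        simpa using ((hasDerivAt_id t).sub_const s).mul_const w
      exact ha.prodMk (hasDerivAt_id t)
    have h2 := ((hφ.differentiable one_ne_zero) ((t - s) * w, t)).hasFDerivAt
    have h3 : HasDerivAt (fun t => φ ((t - s) * w, t))
        (fderiv ℝ φ ((t - s) * w, t) (w, 1)) t :=
      HasFDerivAt.comp_hasDerivAt (f := fun t : ℝ => ((t - s) * w, t)) t h2 h1'
    convert h3 using 1
    have hv : (w, (1 : ℝ)) = ((0 : ℝ), (1 : ℝ)) + w • ((1 : ℝ), (0 : ℝ)) := by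
      simp [Prod.ext_iff]
    simp only [hgdef, hm, hv, map_add, _root_.map_smul, smul_eq_mul]
    try ring
  have hcont : Continuous fun t : ℝ => g (m (s, t)) := hgc.comp (by fun_prop)
  rw [intervalIntegral.integral_eq_sub_of_hasDerivAt key (hcont.intervalIntegrable _ _)]
  have e1 : (s + l / w - s) * w = l := by field_simp; ring
  have e2 : (s - s) * w = 0 := by ring
  rw [e1, e2]
end

section
/- Let w > 0 and l > 0 be real constants. Let μ₀ be a finite Borel measure on ℝ supported in [0,l], let μ_in and μ_b be finite Borel measures on ℝ supported in [0,∞), and let μ_a be a finite Borel measure on ℝ supported in [0,∞) with μ_a ≤ θ#μ₀ + σ#(μ_in + μ_b), where θ(y) = (l − y)/w, σ(s) = s + l/w and # denotes pushforward of measures. Define ν := T₀(μ₀) + T_b(μ_in) + T_b(μ_b) and the outflow measure ν̃_out := θ#μ₀ + σ#(μ_in + μ_b) − μ_a. Then for every continuously differentiable compactly supported function φ : ℝ² → ℝ, ∫_{ℝ²} ( ∂_tφ + w·∂_xφ ) dν + ∫_ℝ φ(y,0) dμ₀(y) + ∫_ℝ φ(0,s) dμ_in(s) + ∫_ℝ φ(0,s)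 dμ_b(s) − ∫_ℝ φ(l,s) dν̃_out(s) − ∫_ℝ φ(l,s) dμ_a(s) = 0; that is, ν is a weak measure-valued solution of the tram problem on one edge in the sense of Definition 3.4, with initial datum μ₀, inflow measure μ_in at x = 0, boarding measure μ_b, alighting measure μ_a and outflow trace ν̃_out at x = l. -/
open MeasureTheory

/-- The interior transport measure from an initial datum `μ₀` supported in `[0,l]`:
the pushforward under `(y,t) ↦ (y + t·w, t)` of the restriction of `μ₀ ⊗ Leb`
to `{(y,t) : 0 ≤ t ≤ (l − y)/w}`. -/
noncomputable def T0 (w l : ℝ) (μ₀ : MeasureTheory.Measure ℝ) :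
    MeasureTheory.Measure (ℝ × ℝ) :=
  Measure.map (fun p : ℝ × ℝ => (p.1 + p.2 * w, p.2))
    ((μ₀.prod volume).restrict {p : ℝ × ℝ | 0 ≤ p.2 ∧ p.2 ≤ (l - p.1) / w})

/-- The interior transport measure from a boundary datum `μ` supported in `[0,∞)`:
the pushforward under `(s,t) ↦ ((t − s)·w, t)` of the restriction of `μ ⊗ Leb`
to `{(s,t) : s ≤ t ≤ s + l/w}`. -/
noncomputable def Tb (w l : ℝ) (μ : MeasureTheory.Measure ℝ) :
    MeasureTheory.Measure (ℝ × ℝ) :=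
  Measure.map (fun p : ℝ × ℝ => ((p.2 - p.1) * w, p.2))
    ((μ.prod volume).restrict {p : ℝ × ℝ | p.1 ≤ p.2 ∧ p.2 ≤ p.1 + l / w})

namespace TramAux

/-- Continuity of the directional derivative of a `C¹` function. -/
lemma contF {φ : ℝ × ℝ → ℝ} (hφ : ContDiff ℝ 1 φ) (v : ℝ × ℝ) :
    Continuous (fun p => fderiv ℝ φ p v) :=
  (hφ.continuous_fderiv one_ne_zero).clm_apply continuous_const

/-- Compact support of the directional derivative. -/
lemma suppF {φ : ℝ × ℝ → ℝ} (hφc : HasCompactSupport φ) (v : ℝ × ℝ) :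
    HasCompactSupport (fun p => fderiv ℝ φ p v) :=
  (hφc.fderiv ℝ).comp_left (g := fun m : ℝ × ℝ →L[ℝ] ℝ => m v) rfl

/-- Derivative of `φ` along a characteristic line. -/
lemma hasDerivAt_path {φ : ℝ × ℝ → ℝ} (hφ : ContDiff ℝ 1 φ) (w c : ℝ) (t : ℝ) :
    HasDerivAt (fun t => φ (c + t * w, t)) (fderiv ℝ φ (c + t * w, t) (w, 1)) t := by
  have hpath : HasDerivAt (fun t : ℝ => (c + t * w, t)) ((w : ℝ), (1 : ℝ)) t :=
    ((hasDerivAt_mul_const w).const_add c).prodMk (hasDerivAt_id t)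
  exact HasFDerivAt.comp_hasDerivAt (f := fun t : ℝ => (c + t * w, t)) t
    ((hφ.differentiable one_ne_zero) (c + t * w, t)).hasFDerivAt hpath

/-- The key computation: the integral of the transport derivative of `φ` against a
pushed-forward restricted product measure equals the integral of boundary differences. -/
lemma key (w : ℝ) (hw : 0 < w) (μ : Measure ℝ) [IsFiniteMeasure μ]
    (c α β : ℝ → ℝ) (hc : Continuous c) (hα : Continuous α) (hβ : Continuous β)
    (Ginv : ℝ × ℝ → ℝ × ℝ) (hGinv : Continuous Ginv)
    (hleft : ∀ p : ℝ × ℝ, Ginv (c p.1 + p.2 * w, p.2) = p)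
    (hle : ∀ᵐ y ∂μ, α y ≤ β y)
    {φ : ℝ × ℝ → ℝ} (hφ : ContDiff ℝ 1 φ) (hφc : HasCompactSupport φ) :
    Integrable (fun p => fderiv ℝ φ p (w, 1))
      (Measure.map (fun p : ℝ × ℝ => (c p.1 + p.2 * w, p.2))
        ((μ.prod volume).restrict {p : ℝ × ℝ | α p.1 ≤ p.2 ∧ p.2 ≤ β p.1})) ∧
    ∫ p, fderiv ℝ φ p (w, 1)
        ∂(Measure.map (fun p : ℝ × ℝ => (c p.1 + p.2 * w, p.2))
          ((μ.prod volume).restrict {p : ℝ × ℝ | α p.1 ≤ p.2 ∧ p.2 ≤ β p.1}))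
      = ∫ y, (φ (c y + β y * w, β y) - φ (c y + α y * w, α y)) ∂μ := by
  set F : ℝ × ℝ → ℝ := fun p => fderiv ℝ φ p (w, 1) with hF
  set G : ℝ × ℝ → ℝ × ℝ := fun p => (c p.1 + p.2 * w, p.2) with hG
  set S : Set (ℝ × ℝ) := {p : ℝ × ℝ | α p.1 ≤ p.2 ∧ p.2 ≤ β p.1} with hSdef
  have hFc : Continuous F := contF hφ _
  have hFsupp : HasCompactSupport F := suppF hφc _
  have hGc : Continuous G := ((hc.comp continuous_fst).add
    (continuous_snd.mul continuous_const)).prodMk continuous_snd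
  have hS : MeasurableSet S := by
    have : S = {p : ℝ × ℝ | α p.1 ≤ p.2} ∩ {p : ℝ × ℝ | p.2 ≤ β p.1} := rfl
    rw [this]
    exact ((isClosed_le (hα.comp continuous_fst) continuous_snd).measurableSet).inter
      ((isClosed_le continuous_snd (hβ.comp continuous_fst)).measurableSet)
  -- compact support of F ∘ G
  have hFGsupp : HasCompactSupport (F ∘ G) := by
    have h1 : tsupport (F ∘ G) ⊆ G ⁻¹' (tsupport F) := by
      apply closure_minimal _ (IsClosed.preimage hGc (isClosed_tsupport F))
      intro p hp
      exact subset_closure hp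
    have h2 : G ⁻¹' (tsupport F) ⊆ Ginv '' (tsupport F) := by
      intro p hp
      exact ⟨G p, hp, hleft p⟩
    exact IsCompact.of_isClosed_subset (hFsupp.image hGinv)
      (isClosed_tsupport _) (h1.trans h2)
  have hFGint : Integrable (F ∘ G) (μ.prod volume) :=
    (hFc.comp hGc).integrable_of_hasCompactSupport hFGsupp
  have hFGintR : Integrable (F ∘ G) ((μ.prod volume).restrict S) := hFGint.restrict
  have hIntMap : Integrable F (Measure.map G ((μ.prod volume).restrict S)) := by
    rw [integrable_map_measure hFc.aestronglyMeasurable hGc.aemeasurable]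
    exact hFGintR
  refine ⟨hIntMap, ?_⟩
  rw [integral_map hGc.aemeasurable hFc.aestronglyMeasurable]
  have : ∫ x, F (G x) ∂((μ.prod volume).restrict S)
      = ∫ x, S.indicator (F ∘ G) x ∂(μ.prod volume) := by
    rw [integral_indicator hS]
    rfl
  rw [this, integral_prod _ (hFGint.indicator hS)]
  apply integral_congr_ae
  filter_upwards [hle] with y hy
  have hsec : (fun t => S.indicator (F ∘ G) (y, t))
      = (Set.Icc (α y) (β y)).indicator (fun t => F (G (y, t))) := by
    funext t
    simp [Set.indicator_apply, hSdef, Set.mem_Icc, Function.comp]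
  rw [hsec, integral_indicator measurableSet_Icc, integral_Icc_eq_integral_Ioc,
    ← intervalIntegral.integral_of_le hy]
  have hFTC : ∫ t in (α y)..(β y), F (G (y, t))
      = φ (c y + β y * w, β y) - φ (c y + α y * w, α y) := by
    refine intervalIntegral.integral_eq_sub_of_hasDerivAt
      (f := fun t => φ (c y + t * w, t)) ?_ ?_
    · intro t _
      exact hasDerivAt_path hφ w (c y) t
    · exact ((hFc.comp (hGc.comp (Continuous.prodMk_right y))).intervalIntegrable _ _)
  exact hFTC

end TramAux

/-- Existence part of Theorem 3.2: the measure `ν = T₀(μ₀) + T_b(μ_in) + T_b(μ_b)`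
built from the solution formula (3.13) is a weak measure-valued solution of the
tram problem on one edge (Definition 3.4), with outflow trace
`ν̃_out = θ#μ₀ + σ#(μ_in + μ_b) − μ_a`. -/
theorem weak_solution_one_edge (w l : ℝ) (hw : 0 < w) (hl : 0 < l)
    (μ₀ μin μb μa : Measure ℝ)
    [IsFiniteMeasure μ₀] [IsFiniteMeasure μin] [IsFiniteMeasure μb]
    [IsFiniteMeasure μa]
    (hμ₀ : μ₀ ((Set.Icc (0 : ℝ) l)ᶜ) = 0)
    (hμin : μin ((Set.Ici (0 : ℝ))ᶜ) = 0)
    (hμb : μb ((Set.Ici (0 : ℝ))ᶜ) = 0)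
    (hμa : μa ((Set.Ici (0 : ℝ))ᶜ) = 0)
    (hμa_le : μa ≤ Measure.map (fun y => (l - y) / w) μ₀
        + Measure.map (fun s => s + l / w) (μin + μb)) :
    ∀ φ : ℝ × ℝ → ℝ, ContDiff ℝ 1 φ → HasCompactSupport φ →
      ∫ p, (fderiv ℝ φ p (0, 1) + w * fderiv ℝ φ p (1, 0))
          ∂(T0 w l μ₀ + Tb w l μin + Tb w l μb)
        + ∫ y, φ (y, 0) ∂μ₀
        + ∫ s, φ (0, s) ∂μin
        + ∫ s, φ (0, s) ∂μb
        - ∫ s, φ (l, s)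
            ∂((Measure.map (fun y => (l - y) / w) μ₀
                + Measure.map (fun s => s + l / w) (μin + μb)) - μa)
        - ∫ s, φ (l, s) ∂μa = 0 := by
  intro φ hφ hφc
  -- rewrite the integrand as a single directional derivative
  have hrw : (fun p => fderiv ℝ φ p (0, 1) + w * fderiv ℝ φ p (1, 0))
      = fun p => fderiv ℝ φ p (w, 1) := by
    funext p
    have h1 : ((w : ℝ), (1 : ℝ)) = w • ((1 : ℝ), (0 : ℝ)) + ((0 : ℝ), (1 : ℝ)) := by
      simp [Prod.ext_iff]
    rw [h1, map_add, ContinuousLinearMap.map_smul, smul_eq_mul]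
    ring
  rw [hrw]
  -- the three transport pieces
  have hT0 := TramAux.key w hw μ₀ id (fun _ => 0) (fun y => (l - y) / w)
    continuous_id continuous_const (by fun_prop)
    (fun q => (q.1 - q.2 * w, q.2)) (by fun_prop)
    (by intro p; simp)
    (by
      have h : ∀ᵐ y ∂μ₀, y ∈ Set.Icc (0 : ℝ) l := by
        rw [MeasureTheory.ae_iff]
        simpa [Set.compl_def] using hμ₀
      filter_upwards [h] with y hy
      exact div_nonneg (sub_nonneg.mpr hy.2) hw.le)
    hφ hφc
  have hTbfun : (fun p : ℝ × ℝ => ((p.2 - p.1) * w, p.2))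
      = fun p : ℝ × ℝ => (-(p.1 * w) + p.2 * w, p.2) := by
    funext p
    have : (p.2 - p.1) * w = -(p.1 * w) + p.2 * w := by ring
    rw [this]
  have hTbkey : ∀ (μ : Measure ℝ) [IsFiniteMeasure μ],
      Integrable (fun p => fderiv ℝ φ p (w, 1)) (Tb w l μ) ∧
      ∫ p, fderiv ℝ φ p (w, 1) ∂(Tb w l μ)
        = ∫ s, (φ (-(s * w) + (s + l / w) * w, s + l / w) - φ (-(s * w) + s * w, s)) ∂μ := by
    intro μ _
    have := TramAux.key w hw μ (fun s => -(s * w)) (fun s => s) (fun s => s + l / w)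
      (by fun_prop) continuous_id (by fun_prop)
      (fun q => ((q.2 * w - q.1) / w, q.2)) (by fun_prop)
      (by
        intro p
        have h1 : (p.2 * w - (-(p.1 * w) + p.2 * w)) / w = p.1 := by
          field_simp
          ring
        show ((p.2 * w - (-(p.1 * w) + p.2 * w)) / w, p.2) = p
        rw [h1])
      (Filter.Eventually.of_forall fun s => le_add_of_nonneg_right
        (div_nonneg hl.le hw.le))
      hφ hφc
    rw [Tb, hTbfun]
    exact this
  obtain ⟨hTbinInt, hTbinEq⟩ := hTbkey μin
  obtain ⟨hTbbInt, hTbbEq⟩ := hTbkey μb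
  have hT0Int : Integrable (fun p => fderiv ℝ φ p (w, 1)) (T0 w l μ₀) := hT0.1
  -- bounded-integrand integrability helper
  obtain ⟨C, hC⟩ := hφc.exists_bound_of_continuous hφ.continuous
  have hIb : ∀ (ν : Measure ℝ) [IsFiniteMeasure ν] (g : ℝ → ℝ × ℝ), Continuous g →
      Integrable (fun s => φ (g s)) ν := by
    intro ν _ g hg
    exact Integrable.mono' (integrable_const C) ((hφ.continuous.comp hg).aestronglyMeasurable)
      (Filter.Eventually.of_forall fun s => hC _)
  -- clean forms of the transport integrals
  have hT0Eq : ∫ p, fderiv ℝ φ p (w, 1) ∂(T0 w l μ₀)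
      = (∫ y, φ (l, (l - y) / w) ∂μ₀) - ∫ y, φ (y, 0) ∂μ₀ := by
    rw [show (∫ p, fderiv ℝ φ p (w, 1) ∂(T0 w l μ₀))
        = ∫ y, (φ (id y + (l - y) / w * w, (l - y) / w) - φ (id y + 0 * w, 0)) ∂μ₀ from hT0.2]
    rw [show (fun y => φ (id y + (l - y) / w * w, (l - y) / w) - φ (id y + 0 * w, 0))
        = fun y => φ (l, (l - y) / w) - φ (y, 0) from ?_]
    · exact integral_sub (hIb μ₀ _ (by fun_prop)) (hIb μ₀ _ (by fun_prop))
    · funext y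
      have h2 : id y + (l - y) / w * w = l := by
        rw [div_mul_cancel₀ _ hw.ne']; simp
      have h3 : id y + 0 * w = y := by simp
      rw [h2, h3]
  have hTbEqn : ∀ (μ : Measure ℝ) [IsFiniteMeasure μ],
      (∫ s, (φ (-(s * w) + (s + l / w) * w, s + l / w) - φ (-(s * w) + s * w, s)) ∂μ)
      = (∫ s, φ (l, s + l / w) ∂μ) - ∫ s, φ (0, s) ∂μ := by
    intro μ _
    rw [show (fun s => φ (-(s * w) + (s + l / w) * w, s + l / w) - φ (-(s * w) + s * w, s))
        = fun s => φ (l, s + l / w) - φ (0, s) from ?_]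
    · exact integral_sub (hIb μ _ (by fun_prop)) (hIb μ _ (by fun_prop))
    · funext s
      have h2 : -(s * w) + (s + l / w) * w = l := by
        field_simp
        ring
      have h3 : -(s * w) + s * w = 0 := by ring
      rw [h2, h3]
  rw [hTbEqn μin] at hTbinEq
  rw [hTbEqn μb] at hTbbEq
  -- split the interior integral
  rw [integral_add_measure (hT0Int.add_measure hTbinInt) hTbbInt,
    integral_add_measure hT0Int hTbinInt, hT0Eq, hTbinEq, hTbbEq]
  -- the outflow measure
  set M : Measure ℝ := Measure.map (fun y => (l - y) / w) μ₀
      + Measure.map (fun s => s + l / w) (μin + μb) with hM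
  have hMfin : IsFiniteMeasure M := by
    rw [hM]; infer_instance
  have hMsubfin : IsFiniteMeasure (M - μa) := isFiniteMeasure_of_le M Measure.sub_le
  have hfl : Continuous (fun s : ℝ => φ (l, s)) := hφ.continuous.comp (by fun_prop)
  have hflInt : ∀ (ν : Measure ℝ) [IsFiniteMeasure ν], Integrable (fun s => φ (l, s)) ν :=
    fun ν _ => hIb ν _ (by fun_prop)
  have hout : (∫ s, φ (l, s) ∂(M - μa)) + ∫ s, φ (l, s) ∂μa
      = (∫ y, φ (l, (l - y) / w) ∂μ₀) + ((∫ s, φ (l, s + l / w) ∂μin)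
          + ∫ s, φ (l, s + l / w) ∂μb) := by
    rw [← integral_add_measure (hflInt (M - μa)) (hflInt μa),
      Measure.sub_add_cancel_of_le hμa_le, hM,
      integral_add_measure (hflInt _) (hflInt _),
      integral_map (by fun_prop : Measurable fun y : ℝ => (l - y) / w).aemeasurable
        hfl.aestronglyMeasurable,
      integral_map (by fun_prop : Measurable fun s : ℝ => s + l / w).aemeasurable
        hfl.aestronglyMeasurable,
      integral_add_measure (hIb μin _ (by fun_prop)) (hIb μb _ (by fun_prop))]
  linarith [hout]
end

section
/- Let w > 0 and l > 0 be real constants. Suppose ν and ν′ are finite Borel measures on ℝ² supported in the strip [0,l] × [0,∞) such that ∫_{ℝ²} ( ∂_tφ(x,t) + w·∂_xφ(x,t) ) dν(x,t) = ∫_{ℝ²} ( ∂_tφ(x,t) + w·∂_xφ(x,t) ) dν′(x,t) for every continuously differentiable compactly supported function φ : ℝ² → ℝ. Then ν = ν′. -/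
open MeasureTheory Set Filter Metric Function
open scoped Convolution Topology Manifold

noncomputable section TramUniqueAux

/-- The measure on `ℝ²` supported on the backward characteristic ray
`{(-(w s), -s) : s > 0}`, used to solve the transport equation. -/
def rayM (w : ℝ) : Measure (ℝ × ℝ) :=
  Measure.map (fun s : ℝ => ((-(w * s), -s) : ℝ × ℝ)) (volume.restrict (Set.Ioi (0 : ℝ)))

lemma rayF_cont (w : ℝ) : Continuous (fun s : ℝ => ((-(w * s), -s) : ℝ × ℝ)) := by
  fun_prop

instance rayM_fc (w : ℝ) : IsFiniteMeasureOnCompacts (rayM w) := by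
  constructor
  intro K hK
  obtain ⟨R, hR⟩ := hK.isBounded.subset_closedBall 0
  rw [rayM, Measure.map_apply (rayF_cont w).measurable hK.measurableSet]
  have hsub : (fun s : ℝ => ((-(w * s), -s) : ℝ × ℝ)) ⁻¹' K ⊆ Set.Icc (-R) R := by
    intro s hs
    have h1 : ‖((-(w * s), -s) : ℝ × ℝ)‖ ≤ R := by
      simpa [mem_closedBall, dist_zero_right] using hR hs
    have h2 : |(-s)| ≤ ‖((-(w * s), -s) : ℝ × ℝ)‖ := by
      simpa [Real.norm_eq_abs] using norm_snd_le ((-(w * s), -s) : ℝ × ℝ)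
    rw [abs_neg] at h2
    have := h2.trans h1
    constructor <;> [linarith [neg_abs_le s]; linarith [le_abs_self s]]
  calc (volume.restrict (Set.Ioi (0:ℝ))) ((fun s : ℝ => ((-(w * s), -s) : ℝ × ℝ)) ⁻¹' K)
      ≤ volume ((fun s : ℝ => ((-(w * s), -s) : ℝ × ℝ)) ⁻¹' K) :=
        Measure.restrict_le_self _
    _ ≤ volume (Set.Icc (-R) R) := measure_mono hsub
    _ < ⊤ := by simp [Real.volume_Icc]

lemma rayM_integral (w : ℝ) (g : ℝ × ℝ → ℝ) (hg : Continuous g) :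
    ∫ q, g q ∂(rayM w) = ∫ s in Set.Ioi (0:ℝ), g (-(w * s), -s) :=
  integral_map (rayF_cont w).measurable.aemeasurable hg.aestronglyMeasurable

/-- Solving the transport equation `∂_t φ + w ∂_x φ = -ψ` with a solution vanishing
for large times. -/
lemma tram_solve (w : ℝ) (ψ : ℝ × ℝ → ℝ) (hψ : ContDiff ℝ 1 ψ) (hψc : HasCompactSupport ψ)
    (R : ℝ) (hR : tsupport ψ ⊆ Metric.closedBall 0 R) :
    ∃ φ : ℝ × ℝ → ℝ, ContDiff ℝ 1 φ ∧ (∀ p : ℝ × ℝ, R < p.2 → φ p = 0) ∧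
      ∀ p : ℝ × ℝ, fderiv ℝ φ p (0, 1) + w * fderiv ℝ φ p (1, 0) = -ψ p := by
  have hψ0 : ∀ a : ℝ × ℝ, R < |a.2| → ψ a = 0 := by
    intro a ha
    apply image_eq_zero_of_notMem_tsupport
    intro hmem
    have h1 : ‖a‖ ≤ R := by simpa [mem_closedBall, dist_zero_right] using hR hmem
    have h2 : |a.2| ≤ ‖a‖ := by simpa [Real.norm_eq_abs] using norm_snd_le a
    linarith
  have hD0 : ∀ a : ℝ × ℝ, R < |a.2| → fderiv ℝ ψ a = 0 := by
    intro a ha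
    apply image_eq_zero_of_notMem_tsupport
    intro hmem
    have hmem' : a ∈ tsupport ψ := tsupport_fderiv_subset ℝ hmem
    have h1 : ‖a‖ ≤ R := by simpa [mem_closedBall, dist_zero_right] using hR hmem'
    have h2 : |a.2| ≤ ‖a‖ := by simpa [Real.norm_eq_abs] using norm_snd_le a
    linarith
  set Lmul : ℝ →L[ℝ] ℝ →L[ℝ] ℝ := ContinuousLinearMap.lsmul ℝ ℝ with hLmul
  set one2 : ℝ × ℝ → ℝ := fun _ => (1 : ℝ) with hone2
  have hco : LocallyIntegrable one2 (rayM w) := locallyIntegrable_const _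
  have hg : ContDiffOn ℝ 1 (↿(fun _ : ℝ => ψ)) (Set.univ ×ˢ Set.univ) :=
    (hψ.comp contDiff_snd).contDiffOn
  -- derivative formula for the convolution
  have hderiv : ∀ p v : ℝ × ℝ, fderiv ℝ (one2 ⋆[Lmul, rayM w] ψ) p v
      = ∫ s in Set.Ioi (0:ℝ), fderiv ℝ ψ (p.1 + w * s, p.2 + s) v := by
    intro p v
    have hD := hasFDerivAt_convolution_right_with_param (μ := rayM w) Lmul isOpen_univ hψc
      (fun p x _ hx => image_eq_zero_of_notMem_tsupport hx) hco hg ((0:ℝ), p) (Set.mem_univ _)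
    have hj : HasFDerivAt (fun x : ℝ × ℝ => (((0:ℝ), x) : ℝ × (ℝ × ℝ)))
        (ContinuousLinearMap.inr ℝ ℝ (ℝ × ℝ)) p :=
      (ContinuousLinearMap.inr ℝ ℝ (ℝ × ℝ)).hasFDerivAt
    have hφD : HasFDerivAt (one2 ⋆[Lmul, rayM w] ψ)
        (((one2 ⋆[Lmul.precompR (ℝ × (ℝ × ℝ)), rayM w]
            fun x => fderiv ℝ (↿(fun _ : ℝ => ψ)) ((0:ℝ), x)) p).comp
          (ContinuousLinearMap.inr ℝ ℝ (ℝ × ℝ))) p := hD.comp p hj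
    rw [hφD.fderiv]
    have hgD : (fun x : ℝ × ℝ => fderiv ℝ (↿(fun _ : ℝ => ψ)) ((0:ℝ), x))
        = fun x : ℝ × ℝ => (fderiv ℝ ψ x).comp (ContinuousLinearMap.snd ℝ ℝ (ℝ × ℝ)) := by
      funext x
      have hx : HasFDerivAt (↿(fun _ : ℝ => ψ))
          ((fderiv ℝ ψ x).comp (ContinuousLinearMap.snd ℝ ℝ (ℝ × ℝ))) ((0:ℝ), x) :=
        ((hψ.differentiable one_ne_zero x).hasFDerivAt).comp _
          (ContinuousLinearMap.snd ℝ ℝ (ℝ × ℝ)).hasFDerivAt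
      exact hx.fderiv
    rw [hgD]
    have hcg' : HasCompactSupport
        (fun x : ℝ × ℝ => (fderiv ℝ ψ x).comp (ContinuousLinearMap.snd ℝ ℝ (ℝ × ℝ))) := by
      apply (hψc.fderiv ℝ).comp_left (g := fun A : (ℝ × ℝ) →L[ℝ] ℝ =>
        A.comp (ContinuousLinearMap.snd ℝ ℝ (ℝ × ℝ)))
      exact ContinuousLinearMap.zero_comp _
    have hg'cont : Continuous
        (fun x : ℝ × ℝ => (fderiv ℝ ψ x).comp (ContinuousLinearMap.snd ℝ ℝ (ℝ × ℝ))) :=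
      (hψ.continuous_fderiv one_ne_zero).clm_comp continuous_const
    have hpre := convolution_precompR_apply (μ := rayM w) Lmul hco hcg' hg'cont p ((0:ℝ), v)
    simp only [ContinuousLinearMap.comp_apply, ContinuousLinearMap.inr_apply]
    rw [hpre]
    have hsnd : (fun a : ℝ × ℝ =>
        ((fderiv ℝ ψ a).comp (ContinuousLinearMap.snd ℝ ℝ (ℝ × ℝ))) (((0:ℝ), v)))
        = fun a => fderiv ℝ ψ a v := rfl
    rw [hsnd]
    rw [show (one2 ⋆[Lmul, rayM w] fun a => fderiv ℝ ψ a v) p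
        = ∫ q, fderiv ℝ ψ (p - q) v ∂(rayM w) by
      simp [convolution_def, hLmul, hone2]]
    rw [rayM_integral w (fun q => fderiv ℝ ψ (p - q) v)
      (((hψ.continuous_fderiv one_ne_zero).comp (continuous_const.sub continuous_id)).clm_apply
        continuous_const)]
    refine setIntegral_congr_fun measurableSet_Ioi fun s _ => ?_
    have : p - ((-(w * s), -s) : ℝ × ℝ) = (p.1 + w * s, p.2 + s) := by
      ext <;> simp [sub_neg_eq_add]
    rw [this]
  refine ⟨one2 ⋆[Lmul, rayM w] ψ, ?_, ?_, ?_⟩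
  · -- smoothness
    have h1 := contDiffOn_convolution_right_with_param (μ := rayM w) Lmul isOpen_univ hψc
      (fun p x _ hx => image_eq_zero_of_notMem_tsupport hx) hco hg
    rw [Set.univ_prod_univ, contDiffOn_univ] at h1
    have h2 : ContDiff ℝ 1 fun x : ℝ × ℝ => (((0:ℝ), x) : ℝ × (ℝ × ℝ)) :=
      contDiff_const.prodMk contDiff_id
    exact h1.comp h2
  · -- vanishing for large times
    intro p hp
    have hrepr : (one2 ⋆[Lmul, rayM w] ψ) p
        = ∫ s in Set.Ioi (0:ℝ), ψ (p.1 + w * s, p.2 + s) := by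
      rw [show (one2 ⋆[Lmul, rayM w] ψ) p = ∫ q, ψ (p - q) ∂(rayM w) by
        simp [convolution_def, hLmul, hone2]]
      rw [rayM_integral w (fun q => ψ (p - q))
        (hψ.continuous.comp (continuous_const.sub continuous_id))]
      refine setIntegral_congr_fun measurableSet_Ioi fun s _ => ?_
      have : p - ((-(w * s), -s) : ℝ × ℝ) = (p.1 + w * s, p.2 + s) := by
        ext <;> simp [sub_neg_eq_add]
      rw [this]
    rw [hrepr]
    apply setIntegral_eq_zero_of_forall_eq_zero
    intro s hs
    have hs' : (0:ℝ) < s := hs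
    apply hψ0
    have h1 : R < p.2 + s := by linarith
    calc R < p.2 + s := h1
      _ ≤ |p.2 + s| := le_abs_self _
  · -- the transport identity
    intro p
    set c : ℝ → ℝ × ℝ := fun s => (p.1 + w * s, p.2 + s) with hc
    have hint : ∀ v : ℝ × ℝ, IntegrableOn (fun s => fderiv ℝ ψ (c s) v) (Set.Ioi (0:ℝ)) := by
      intro v
      have hcont : Continuous fun s => fderiv ℝ ψ (c s) v :=
        ((hψ.continuous_fderiv one_ne_zero).comp (by fun_prop)).clm_apply continuous_const
      have hsupp : HasCompactSupport fun s => fderiv ℝ ψ (c s) v := by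
        apply HasCompactSupport.intro (isCompact_Icc (a := -(R + |p.2| + 1)) (b := R + |p.2| + 1))
        intro s hs
        simp only [Set.mem_Icc, not_and_or, not_le] at hs
        have habs : R < |p.2 + s| := by
          rcases hs with hs | hs
          · have h2 : p.2 + s < -R := by have := le_abs_self p.2; linarith
            calc R < -(p.2 + s) := by linarith
              _ ≤ |p.2 + s| := neg_le_abs _
          · have h1 : R < p.2 + s := by have := neg_abs_le p.2; linarith
            exact h1.trans_le (le_abs_self _)
        have h0 : fderiv ℝ ψ (c s) = 0 := hD0 (c s) habs
        simp [h0]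
      exact (hcont.integrable_of_hasCompactSupport hsupp).integrableOn
    have hFTC : ∫ s in Set.Ioi (0:ℝ), fderiv ℝ ψ (c s) (w, 1) = -ψ p := by
      have hderiv' : ∀ s ∈ Set.Ici (0:ℝ), HasDerivAt (fun s => ψ (c s))
          (fderiv ℝ ψ (c s) (w, 1)) s := by
        intro s _
        have hinner : HasDerivAt c ((w, 1) : ℝ × ℝ) s := by
          have h1 : HasDerivAt (fun s : ℝ => p.1 + w * s) w s := by
            simpa using ((hasDerivAt_id s).const_mul w).const_add p.1
          have h2 : HasDerivAt (fun s : ℝ => p.2 + s) 1 s := by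
            simpa using (hasDerivAt_id s).const_add p.2
          exact h1.prodMk h2
        exact ((hψ.differentiable one_ne_zero (c s)).hasFDerivAt).comp_hasDerivAt s hinner
      have htend : Tendsto (fun s => ψ (c s)) atTop (𝓝 0) := by
        apply Tendsto.congr' _ tendsto_const_nhds
        filter_upwards [eventually_ge_atTop (R + |p.2| + 1)] with s hs
        have h2 : R < |p.2 + s| := by
          have h1 : R < p.2 + s := by have := neg_abs_le p.2; linarith
          exact h1.trans_le (le_abs_self _)
        exact (hψ0 _ h2).symm
      have hres := integral_Ioi_of_hasDerivAt_of_tendsto' hderiv' (hint (w, 1)) htend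
      rw [hres]
      have hc0 : c 0 = p := by ext <;> simp [hc]
      rw [hc0]
      ring
    rw [hderiv p (0,1), hderiv p (1,0)]
    rw [← integral_const_mul]
    rw [← integral_add (hint (0,1)) ((hint (1,0)).const_mul w)]
    rw [← hFTC]
    refine setIntegral_congr_fun measurableSet_Ioi fun s _ => ?_
    have hv : ((w, 1) : ℝ × ℝ) = (0, 1) + w • (1, 0) := by ext <;> simp
    rw [hv, map_add, (fderiv ℝ ψ (c s)).map_smul]
    simp [smul_eq_mul]

lemma measure_le_of_pairing (μ1 μ2 : Measure (ℝ × ℝ)) [IsFiniteMeasure μ1] [IsFiniteMeasure μ2]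
    (hpair : ∀ ψ : ℝ × ℝ → ℝ, ContDiff ℝ 1 ψ → HasCompactSupport ψ →
      ∫ p, ψ p ∂μ1 = ∫ p, ψ p ∂μ2)
    {K : Set (ℝ × ℝ)} (hK : IsCompact K) : μ1 K ≤ μ2 K := by
  refine ENNReal.le_of_forall_pos_le_add fun ε hε _ => ?_
  obtain ⟨U, hKU, hUopen, hUlt⟩ := Set.exists_isOpen_lt_of_lt K (μ2 K + ε)
    (ENNReal.lt_add_right (measure_ne_top μ2 K) (by exact_mod_cast hε.ne'))
  obtain ⟨RK, hRK⟩ := hK.isBounded.subset_ball 0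
  set V : Set (ℝ × ℝ) := U ∩ Metric.ball 0 RK with hV
  have hVopen : IsOpen V := hUopen.inter isOpen_ball
  have hKV : K ⊆ V := subset_inter hKU hRK
  obtain ⟨f, hf0, hf1, hf01⟩ := exists_contMDiffMap_zero_one_of_isClosed (n := 1) (𝓘(ℝ, ℝ × ℝ))
    hVopen.isClosed_compl hK.isClosed ((disjoint_compl_left (a := V)).mono_right hKV)
  have fc : ContDiff ℝ 1 (f : ℝ × ℝ → ℝ) := by
    have := contMDiff_iff_contDiff.mp f.contMDiff
    exact this.of_le (by norm_num)
  have hsupp : HasCompactSupport (f : ℝ × ℝ → ℝ) := by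
    have h1 : tsupport (f : ℝ × ℝ → ℝ) ⊆ closure V := by
      apply closure_mono
      intro x hx
      by_contra hxV
      exact hx (hf0 hxV)
    have h2 : IsCompact (closure V) := by
      apply Metric.isCompact_of_isClosed_isBounded isClosed_closure
      exact (isBounded_ball.subset inter_subset_right).closure
    exact h2.of_isClosed_subset (isClosed_tsupport _) h1
  have hint1 : Integrable (f : ℝ × ℝ → ℝ) μ1 :=
    fc.continuous.integrable_of_hasCompactSupport hsupp
  have hint2 : Integrable (f : ℝ × ℝ → ℝ) μ2 :=
    fc.continuous.integrable_of_hasCompactSupport hsupp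
  have step1 : (μ1 K).toReal ≤ ∫ p, f p ∂μ1 := by
    change μ1.real K ≤ _
    rw [← integral_indicator_one hK.measurableSet]
    refine integral_mono ((integrable_const (1:ℝ)).indicator hK.measurableSet) hint1 fun x => ?_
    by_cases hx : x ∈ K
    · simp [Set.indicator_of_mem hx, hf1 hx]
    · simp only [Set.indicator_of_notMem hx]
      exact (hf01 x).1
  have step2 : ∫ p, f p ∂μ2 ≤ (μ2 V).toReal := by
    change _ ≤ μ2.real V
    rw [← integral_indicator_one hVopen.measurableSet]
    refine integral_mono hint2 ((integrable_const (1:ℝ)).indicator hVopen.measurableSet)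
      fun x => ?_
    by_cases hx : x ∈ V
    · simp only [Set.indicator_of_mem hx]
      exact (hf01 x).2
    · simp [Set.indicator_of_notMem hx, hf0 hx]
  have step : (μ1 K).toReal ≤ (μ2 V).toReal := by
    calc (μ1 K).toReal ≤ ∫ p, f p ∂μ1 := step1
      _ = ∫ p, f p ∂μ2 := hpair f fc hsupp
      _ ≤ (μ2 V).toReal := step2
  have hfin : μ1 K ≤ μ2 V := by
    rw [← ENNReal.ofReal_toReal (measure_ne_top μ1 K),
      ← ENNReal.ofReal_toReal (measure_ne_top μ2 V)]
    exact ENNReal.ofReal_le_ofReal step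
  calc μ1 K ≤ μ2 V := hfin
    _ ≤ μ2 U := measure_mono inter_subset_left
    _ ≤ μ2 K + ε := hUlt.le

lemma ext_of_pairing (μ1 μ2 : Measure (ℝ × ℝ)) [IsFiniteMeasure μ1] [IsFiniteMeasure μ2]
    (hpair : ∀ ψ : ℝ × ℝ → ℝ, ContDiff ℝ 1 ψ → HasCompactSupport ψ →
      ∫ p, ψ p ∂μ1 = ∫ p, ψ p ∂μ2) : μ1 = μ2 := by
  have hcpt : ∀ K : Set (ℝ × ℝ), IsCompact K → μ1 K = μ2 K := fun K hK =>
    le_antisymm (measure_le_of_pairing μ1 μ2 hpair hK)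
      (measure_le_of_pairing μ2 μ1 (fun ψ h1 h2 => (hpair ψ h1 h2).symm) hK)
  ext s hs
  rw [hs.measure_eq_iSup_isCompact (μ := μ1), hs.measure_eq_iSup_isCompact (μ := μ2)]
  exact iSup_congr fun K => iSup_congr fun _ => iSup_congr fun hK => hcpt K hK

end TramUniqueAux

/-- Uniqueness part of Theorem 3.2: two finite Borel measures supported in the
strip `[0,l] × [0,∞)` that pair identically against `∂_tφ + w ∂_xφ` for all
compactly supported `C¹` test functions `φ` coincide. -/
theorem weak_solution_unique (w l : ℝ) (hw : 0 < w) (hl : 0 < l)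
    (ν ν' : Measure (ℝ × ℝ)) [IsFiniteMeasure ν] [IsFiniteMeasure ν']
    (hν : ν ((Set.Icc (0 : ℝ) l ×ˢ Set.Ici (0 : ℝ))ᶜ) = 0)
    (hν' : ν' ((Set.Icc (0 : ℝ) l ×ˢ Set.Ici (0 : ℝ))ᶜ) = 0)
    (h : ∀ φ : ℝ × ℝ → ℝ, ContDiff ℝ 1 φ → HasCompactSupport φ →
      ∫ p, (fderiv ℝ φ p (0, 1) + w * fderiv ℝ φ p (1, 0)) ∂ν
        = ∫ p, (fderiv ℝ φ p (0, 1) + w * fderiv ℝ φ p (1, 0)) ∂ν') :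
    ν = ν' := by
  set S : Set (ℝ × ℝ) := Set.Icc (0 : ℝ) l ×ˢ Set.Ici (0 : ℝ) with hS
  have hae1 : ∀ᵐ p ∂ν, p ∈ S := by rw [ae_iff]; exact hν
  have hae2 : ∀ᵐ p ∂ν', p ∈ S := by rw [ae_iff]; exact hν'
  apply ext_of_pairing ν ν'
  intro ψ hψ hψc
  obtain ⟨R0, hR0⟩ := hψc.isBounded.subset_closedBall 0
  set R : ℝ := max R0 0 with hRdef
  have hR : tsupport ψ ⊆ Metric.closedBall 0 R :=
    hR0.trans (Metric.closedBall_subset_closedBall (le_max_left _ _))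
  obtain ⟨φ, hφ, hφ0, hφeq⟩ := tram_solve w ψ hψ hψc R hR
  set r : ℝ := max l R + 1 with hrdef
  have hr0 : 0 < r := by
    have : (0:ℝ) ≤ max l R := le_trans hl.le (le_max_left _ _)
    linarith
  set χ : ContDiffBump ((0 : ℝ × ℝ)) := ⟨r, r + 1, hr0, lt_add_one r⟩ with hχ
  set Φ : ℝ × ℝ → ℝ := fun q => χ q * φ q with hΦ
  have hΦs : ContDiff ℝ 1 Φ := χ.contDiff.mul hφ
  have hΦc : HasCompactSupport Φ := χ.hasCompactSupport.mul_right
  have hψ0 : ∀ a : ℝ × ℝ, R < a.2 → ψ a = 0 := by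
    intro a ha
    apply image_eq_zero_of_notMem_tsupport
    intro hmem
    have h1 : ‖a‖ ≤ R := by simpa [mem_closedBall, dist_zero_right] using hR hmem
    have h2 : |a.2| ≤ ‖a‖ := by simpa [Real.norm_eq_abs] using norm_snd_le a
    have := le_abs_self a.2
    linarith
  have hstrip : ∀ p : ℝ × ℝ, p ∈ S →
      fderiv ℝ Φ p (0, 1) + w * fderiv ℝ Φ p (1, 0) = -ψ p := by
    intro p hp
    obtain ⟨hp1, hp2⟩ := hp
    rcases le_or_gt p.2 R with hpR | hpR
    · -- inside the ball where the cutoff is one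
      have hball : p ∈ Metric.ball (0 : ℝ × ℝ) r := by
        rw [mem_ball, dist_zero_right]
        have hn : ‖p‖ = max ‖p.1‖ ‖p.2‖ := rfl
        rw [hn, Real.norm_eq_abs, Real.norm_eq_abs]
        have h1 : |p.1| ≤ l := abs_le.mpr ⟨by linarith [hp1.1], hp1.2⟩
        have h2 : |p.2| ≤ R := abs_le.mpr ⟨by
          have : (0:ℝ) ≤ R := le_max_right _ _
          have := hp2.out; linarith, hpR⟩
        have := le_max_left l R
        have := le_max_right l R
        apply max_lt <;> [linarith; linarith]
      have hev : Φ =ᶠ[𝓝 p] φ := by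
        filter_upwards [isOpen_ball.mem_nhds hball] with q hq
        have hone : χ q = 1 := χ.one_of_mem_closedBall (Metric.ball_subset_closedBall hq)
        simp [hΦ, hone]
      rw [hev.fderiv_eq]
      exact hφeq p
    · -- outside the support region: everything vanishes
      have hopen : IsOpen {q : ℝ × ℝ | R < q.2} := isOpen_lt continuous_const continuous_snd
      have hev : Φ =ᶠ[𝓝 p] fun _ => (0:ℝ) := by
        filter_upwards [hopen.mem_nhds hpR] with q hq
        simp [hΦ, hφ0 q hq]
      rw [hev.fderiv_eq]
      rw [fderiv_const_apply]
      simp [hψ0 p hpR]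
  have e1 : ∫ p, (fderiv ℝ Φ p (0, 1) + w * fderiv ℝ Φ p (1, 0)) ∂ν = ∫ p, (-ψ p) ∂ν :=
    integral_congr_ae (by filter_upwards [hae1] with p hp using hstrip p hp)
  have e2 : ∫ p, (fderiv ℝ Φ p (0, 1) + w * fderiv ℝ Φ p (1, 0)) ∂ν' = ∫ p, (-ψ p) ∂ν' :=
    integral_congr_ae (by filter_upwards [hae2] with p hp using hstrip p hp)
  have := h Φ hΦs hΦc
  rw [e1, e2, integral_neg, integral_neg, neg_inj] at this
  exact this
end

section
/- Let w > 0 and l > 0 be real constants, θ(y) = (l − y)/w, σ(s) = s + l/w. Let μ₀ be a finite Borel measure on ℝ supported in [0,l], μ_in and μ_b finite Borel measures on ℝ supported in [0,∞), and μ_a a finite Borel measure on ℝ supported in [0,∞) with μ_a ≤ θ#μ₀ + σ#(μ_in + μ_b). Then ν := T₀(μ₀) + T_b(μ_in) + T_b(μ_b) is the unique finite Borel measure on ℝ², supported in [0,l] × [0,∞), such that for every continuously differentiable compactly supported function φ : ℝ² → ℝ, ∫_{ℝ²}(∂_tφ + w·∂_xφ)dν + ∫_ℝ φ(y,0)dμ₀(y)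 + ∫_ℝ φ(0,s)d(μ_in + μ_b)(s) − ∫_ℝ φ(l,s)d(θ#μ₀ + σ#(μ_in + μ_b) − μ_a)(s) − ∫_ℝ φ(l,s)dμ_a(s) = 0. -/
open MeasureTheory

lemma measS0 (w l : ℝ) : MeasurableSet {p : ℝ × ℝ | 0 ≤ p.2 ∧ p.2 ≤ (l - p.1) / w} := by
  apply MeasurableSet.inter
  · exact measurableSet_le measurable_const measurable_snd
  · exact measurableSet_le measurable_snd ((measurable_const.sub measurable_fst).div_const w)

lemma measSb (w l : ℝ) : MeasurableSet {p : ℝ × ℝ | p.1 ≤ p.2 ∧ p.2 ≤ p.1 + l / w} := by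
  apply MeasurableSet.inter
  · exact measurableSet_le measurable_fst measurable_snd
  · exact measurableSet_le measurable_snd (measurable_fst.add measurable_const)

lemma measg0 (w : ℝ) : Measurable (fun p : ℝ × ℝ => (p.1 + p.2 * w, p.2)) :=
  ((measurable_fst.add (measurable_snd.mul measurable_const))).prod measurable_snd

lemma measgb (w : ℝ) : Measurable (fun p : ℝ × ℝ => ((p.2 - p.1) * w, p.2)) :=
  (((measurable_snd.sub measurable_fst)).mul measurable_const).prod measurable_snd

lemma ae_mem_of_compl_null {α : Type*} [MeasurableSpace α] {μ : Measure α} {s : Set α}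
    (h : μ sᶜ = 0) : ∀ᵐ y ∂μ, y ∈ s := by
  rw [MeasureTheory.ae_iff]
  exact h

lemma S0_finite (w l : ℝ) (hw : 0 < w) (μ₀ : Measure ℝ) [IsFiniteMeasure μ₀]
    (hμ₀ : μ₀ ((Set.Icc (0 : ℝ) l)ᶜ) = 0) :
    (μ₀.prod volume) {p : ℝ × ℝ | 0 ≤ p.2 ∧ p.2 ≤ (l - p.1) / w} ≠ ⊤ := by
  have h : ∀ᵐ y ∂μ₀, volume (Prod.mk y ⁻¹' {p : ℝ × ℝ | 0 ≤ p.2 ∧ p.2 ≤ (l - p.1) / w})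
      ≤ ENNReal.ofReal (l / w) := by
    filter_upwards [ae_mem_of_compl_null hμ₀] with y hy
    have he : (Prod.mk y ⁻¹' {p : ℝ × ℝ | 0 ≤ p.2 ∧ p.2 ≤ (l - p.1) / w})
        = Set.Icc 0 ((l - y)/w) := by
      ext t; simp [Set.mem_Icc]
    rw [he, Real.volume_Icc]
    apply ENNReal.ofReal_le_ofReal
    have h2 : (l - y)/w ≤ l / w := by
      gcongr
      linarith [hy.1]
    linarith
  have hfin : (μ₀.prod volume) {p : ℝ × ℝ | 0 ≤ p.2 ∧ p.2 ≤ (l - p.1) / w} < ⊤ := by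
    rw [Measure.prod_apply (measS0 w l)]
    calc ∫⁻ y, volume (Prod.mk y ⁻¹' {p : ℝ × ℝ | 0 ≤ p.2 ∧ p.2 ≤ (l - p.1) / w}) ∂μ₀
        ≤ ∫⁻ _, ENNReal.ofReal (l / w) ∂μ₀ := lintegral_mono_ae h
      _ = ENNReal.ofReal (l / w) * μ₀ Set.univ := by rw [lintegral_const]
      _ < ⊤ := ENNReal.mul_lt_top ENNReal.ofReal_lt_top (measure_lt_top μ₀ _)
  exact hfin.ne

lemma Sb_finite (w l : ℝ) (μ : Measure ℝ) [IsFiniteMeasure μ] :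
    (μ.prod volume) {p : ℝ × ℝ | p.1 ≤ p.2 ∧ p.2 ≤ p.1 + l / w} ≠ ⊤ := by
  rw [Measure.prod_apply (measSb w l)]
  have h : ∀ y, volume (Prod.mk y ⁻¹' {p : ℝ × ℝ | p.1 ≤ p.2 ∧ p.2 ≤ p.1 + l / w})
      = ENNReal.ofReal (l / w) := by
    intro y
    have : (Prod.mk y ⁻¹' {p : ℝ × ℝ | p.1 ≤ p.2 ∧ p.2 ≤ p.1 + l / w}) = Set.Icc y (y + l/w) := by
      ext t; simp [Set.mem_Icc]
    rw [this, Real.volume_Icc]; ring_nf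
  simp only [h]
  rw [lintegral_const]
  exact (ENNReal.mul_lt_top ENNReal.ofReal_lt_top (measure_lt_top μ _)).ne

lemma T0_finite (w l : ℝ) (hw : 0 < w) (μ₀ : Measure ℝ) [IsFiniteMeasure μ₀]
    (hμ₀ : μ₀ ((Set.Icc (0 : ℝ) l)ᶜ) = 0) : IsFiniteMeasure (T0 w l μ₀) := by
  constructor
  rw [T0, Measure.map_apply (measg0 w) MeasurableSet.univ, Set.preimage_univ,
    Measure.restrict_apply MeasurableSet.univ, Set.univ_inter]
  exact (S0_finite w l hw μ₀ hμ₀).lt_top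

lemma Tb_finite (w l : ℝ) (μ : Measure ℝ) [IsFiniteMeasure μ] : IsFiniteMeasure (Tb w l μ) := by
  constructor
  rw [Tb, Measure.map_apply (measgb w) MeasurableSet.univ, Set.preimage_univ,
    Measure.restrict_apply MeasurableSet.univ, Set.univ_inter]
  exact (Sb_finite w l μ).lt_top

lemma T0_compl (w l : ℝ) (hw : 0 < w) (μ₀ : Measure ℝ)
    (hμ₀ : μ₀ ((Set.Icc (0 : ℝ) l)ᶜ) = 0) :
    T0 w l μ₀ ((Set.Icc (0 : ℝ) l ×ˢ Set.Ici (0 : ℝ))ᶜ) = 0 := by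
  have hB : MeasurableSet ((Set.Icc (0 : ℝ) l ×ˢ Set.Ici (0 : ℝ))ᶜ) :=
    ((measurableSet_Icc.prod measurableSet_Ici)).compl
  rw [T0, Measure.map_apply (measg0 w) hB, Measure.restrict_apply ((measg0 w) hB)]
  refine measure_mono_null (t := (Set.Icc (0:ℝ) l)ᶜ ×ˢ (Set.univ : Set ℝ)) ?_ ?_
  · rintro ⟨y, t⟩ ⟨hmem, ht0, htl⟩
    simp only [Set.mem_preimage, Set.mem_compl_iff, Set.mem_prod, Set.mem_Icc, Set.mem_Ici] at hmem ⊢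
    refine ⟨fun hy => hmem ⟨⟨?_, ?_⟩, ht0⟩, trivial⟩
    · have : 0 ≤ t * w := mul_nonneg ht0 hw.le
      linarith [hy.1]
    · have : t * w ≤ l - y := by
        rw [← le_div_iff₀ hw] at *
        exact htl
      linarith
  · rw [Measure.prod_prod, hμ₀, zero_mul]

lemma Tb_compl (w l : ℝ) (hw : 0 < w) (hl : 0 < l) (μ : Measure ℝ)
    (hμ : μ ((Set.Ici (0 : ℝ))ᶜ) = 0) :
    Tb w l μ ((Set.Icc (0 : ℝ) l ×ˢ Set.Ici (0 : ℝ))ᶜ) = 0 := by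
  have hB : MeasurableSet ((Set.Icc (0 : ℝ) l ×ˢ Set.Ici (0 : ℝ))ᶜ) :=
    ((measurableSet_Icc.prod measurableSet_Ici)).compl
  rw [Tb, Measure.map_apply (measgb w) hB, Measure.restrict_apply ((measgb w) hB)]
  refine measure_mono_null (t := (Set.Ici (0:ℝ))ᶜ ×ˢ (Set.univ : Set ℝ)) ?_ ?_
  · rintro ⟨s, t⟩ ⟨hmem, hst, htl⟩
    simp only [Set.mem_preimage, Set.mem_compl_iff, Set.mem_prod, Set.mem_Icc,
      Set.mem_Ici] at hmem ⊢
    refine ⟨fun hs => hmem ⟨⟨?_, ?_⟩, le_trans hs hst⟩, trivial⟩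
    · exact mul_nonneg (by linarith) hw.le
    · have : t - s ≤ l / w := by linarith
      calc (t - s) * w ≤ (l / w) * w := by
            apply mul_le_mul_of_nonneg_right this hw.le
        _ = l := by field_simp
  · rw [Measure.prod_prod, hμ, zero_mul]

lemma integrable_of_bdd {α : Type*} [MeasurableSpace α] {μ : Measure α} [IsFiniteMeasure μ]
    {f : α → ℝ} (hf : AEStronglyMeasurable f μ) {C : ℝ} (h : ∀ x, ‖f x‖ ≤ C) :
    Integrable f μ :=
  Integrable.mono' (integrable_const C) hf (Filter.Eventually.of_forall h)

section Fprop

variable {w : ℝ} {φ : ℝ × ℝ → ℝ}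

lemma F_cont (hφ : ContDiff ℝ 1 φ) :
    Continuous (fun p => fderiv ℝ φ p (0, 1) + w * fderiv ℝ φ p (1, 0)) := by
  have h := hφ.continuous_fderiv one_ne_zero
  exact ((h.clm_apply continuous_const)).add (continuous_const.mul (h.clm_apply continuous_const))

lemma F_bdd (hφ : ContDiff ℝ 1 φ) (hφc : HasCompactSupport φ) :
    ∃ C, ∀ p, ‖fderiv ℝ φ p (0, 1) + w * fderiv ℝ φ p (1, 0)‖ ≤ C := by
  have h1 : HasCompactSupport (fun p => fderiv ℝ φ p (0, 1) + w * fderiv ℝ φ p (1, 0)) := by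
    apply HasCompactSupport.add
    · exact (hφc.fderiv ℝ).comp_left (g := fun L : (ℝ × ℝ) →L[ℝ] ℝ => L (0, 1)) rfl
    · apply HasCompactSupport.mul_left
      exact (hφc.fderiv ℝ).comp_left (g := fun L : (ℝ × ℝ) →L[ℝ] ℝ => L (1, 0)) rfl
  exact h1.exists_bound_of_continuous (F_cont hφ)

lemma phi_bdd (hφ : ContDiff ℝ 1 φ) (hφc : HasCompactSupport φ) : ∃ C, ∀ p, ‖φ p‖ ≤ C :=
  hφc.exists_bound_of_continuous hφ.continuous

lemma fderiv_dir (hφ : ContDiff ℝ 1 φ) (p : ℝ × ℝ) :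
    fderiv ℝ φ p (0, 1) + w * fderiv ℝ φ p (1, 0) = fderiv ℝ φ p (w, 1) := by
  have h : ((w, 1) : ℝ × ℝ) = (0, 1) + w • (1, 0) := by
    simp [Prod.ext_iff]
  rw [h, (fderiv ℝ φ p).map_add, (fderiv ℝ φ p).map_smul, smul_eq_mul]

end Fprop

lemma integral_T0 (w l : ℝ) (hw : 0 < w) (μ₀ : Measure ℝ) [IsFiniteMeasure μ₀]
    (hμ₀ : μ₀ ((Set.Icc (0 : ℝ) l)ᶜ) = 0)
    (φ : ℝ × ℝ → ℝ) (hφ : ContDiff ℝ 1 φ) (hφc : HasCompactSupport φ) :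
    ∫ p, (fderiv ℝ φ p (0, 1) + w * fderiv ℝ φ p (1, 0)) ∂(T0 w l μ₀)
      = ∫ y, φ (l, (l - y) / w) ∂μ₀ - ∫ y, φ (y, 0) ∂μ₀ := by
  set F : ℝ × ℝ → ℝ := fun p => fderiv ℝ φ p (0, 1) + w * fderiv ℝ φ p (1, 0) with hF
  obtain ⟨C, hC⟩ := F_bdd hφ hφc (w := w)
  have hFc : Continuous F := F_cont hφ
  set S : Set (ℝ × ℝ) := {p : ℝ × ℝ | 0 ≤ p.2 ∧ p.2 ≤ (l - p.1) / w} with hS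
  set g : ℝ × ℝ → ℝ × ℝ := fun p => (p.1 + p.2 * w, p.2) with hg
  have hgc : Continuous g := by fun_prop
  have h1 : ∫ p, F p ∂(T0 w l μ₀) = ∫ p, S.indicator (F ∘ g) p ∂(μ₀.prod volume) := by
    rw [T0, integral_map (measg0 w).aemeasurable hFc.aestronglyMeasurable,
      ← integral_indicator (measS0 w l)]
    rfl
  have hint : Integrable (S.indicator (F ∘ g)) (μ₀.prod volume) := by
    have hind : Integrable (S.indicator (fun _ => C)) (μ₀.prod volume) := by
      rw [integrable_indicator_iff (measS0 w l)]
      exact integrableOn_const (S0_finite w l hw μ₀ hμ₀)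
    apply Integrable.mono' hind
    · exact ((hFc.comp hgc).aestronglyMeasurable).indicator (measS0 w l)
    · apply Filter.Eventually.of_forall
      intro p
      by_cases hp : p ∈ S
      · simp only [Set.indicator_of_mem hp]
        exact hC (g p)
      · simp [Set.indicator_of_notMem hp]
  have h2 : ∫ p, S.indicator (F ∘ g) p ∂(μ₀.prod volume)
      = ∫ y, ∫ t, S.indicator (F ∘ g) (y, t) ∂volume ∂μ₀ := integral_prod _ hint
  have h3 : ∀ᵐ y ∂μ₀, ∫ t, S.indicator (F ∘ g) (y, t) ∂volume
      = φ (l, (l - y) / w) - φ (y, 0) := by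
    filter_upwards [ae_mem_of_compl_null hμ₀] with y hy
    have hθ : 0 ≤ (l - y) / w := div_nonneg (by linarith [hy.2]) hw.le
    have e1 : (fun t => S.indicator (F ∘ g) (y, t))
        = (Set.Icc 0 ((l - y) / w)).indicator (fun t => F (y + t * w, t)) := by
      funext t
      by_cases ht : t ∈ Set.Icc 0 ((l - y) / w)
      · rw [Set.indicator_of_mem ht]
        have : (y, t) ∈ S := by simpa [hS, Set.mem_Icc] using ht
        rw [Set.indicator_of_mem this]; rfl
      · rw [Set.indicator_of_notMem ht]
        have : (y, t) ∉ S := by simpa [hS, Set.mem_Icc] using ht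
        rw [Set.indicator_of_notMem this]
    rw [e1, integral_indicator measurableSet_Icc,
      MeasureTheory.integral_Icc_eq_integral_Ioc,
      ← intervalIntegral.integral_of_le hθ]
    have hFTC : ∫ t in (0 : ℝ)..((l - y) / w), F (y + t * w, t)
        = φ (y + ((l - y) / w) * w, (l - y) / w) - φ (y + 0 * w, 0) := by
      apply intervalIntegral.integral_eq_sub_of_hasDerivAt (f := fun t => φ (y + t * w, t))
      · intro t _
        have hinner : HasDerivAt (fun t : ℝ => (y + t * w, t)) ((w, 1) : ℝ × ℝ) t := by
          have ha : HasDerivAt (fun t : ℝ => y + t * w) w t := by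
            simpa using ((hasDerivAt_id t).mul_const w).const_add y
          exact ha.prodMk (hasDerivAt_id t)
        have hout : HasFDerivAt φ (fderiv ℝ φ (y + t * w, t)) (y + t * w, t) :=
          (hφ.differentiable one_ne_zero (y + t * w, t)).hasFDerivAt
        have hcomp : HasDerivAt (fun t : ℝ => φ (y + t * w, t))
            (fderiv ℝ φ (y + t * w, t) (w, 1)) t := HasFDerivAt.comp_hasDerivAt (f := fun t : ℝ => (y + t * w, t)) t hout hinner
        simpa [hF, fderiv_dir hφ] using hcomp
      · exact (hFc.comp (by fun_prop : Continuous fun t : ℝ => (y + t * w, t))).intervalIntegrable _ _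
    rw [hFTC]
    have : y + ((l - y) / w) * w = l := by field_simp; ring
    rw [this]
    norm_num
  obtain ⟨Cφ, hCφ⟩ := phi_bdd hφ hφc
  have hint1 : Integrable (fun y => φ (l, (l - y) / w)) μ₀ :=
    integrable_of_bdd ((hφ.continuous.comp (by fun_prop)).aestronglyMeasurable)
      (fun y => hCφ _)
  have hint2 : Integrable (fun y => φ (y, 0)) μ₀ :=
    integrable_of_bdd ((hφ.continuous.comp (by fun_prop)).aestronglyMeasurable)
      (fun y => hCφ _)
  rw [h1, h2, integral_congr_ae h3, integral_sub hint1 hint2]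

lemma integral_Tb (w l : ℝ) (hw : 0 < w) (hl : 0 < l) (μ : Measure ℝ) [IsFiniteMeasure μ]
    (φ : ℝ × ℝ → ℝ) (hφ : ContDiff ℝ 1 φ) (hφc : HasCompactSupport φ) :
    ∫ p, (fderiv ℝ φ p (0, 1) + w * fderiv ℝ φ p (1, 0)) ∂(Tb w l μ)
      = ∫ s, φ (l, s + l / w) ∂μ - ∫ s, φ (0, s) ∂μ := by
  set F : ℝ × ℝ → ℝ := fun p => fderiv ℝ φ p (0, 1) + w * fderiv ℝ φ p (1, 0) with hF
  obtain ⟨C, hC⟩ := F_bdd hφ hφc (w := w)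
  have hFc : Continuous F := F_cont hφ
  set S : Set (ℝ × ℝ) := {p : ℝ × ℝ | p.1 ≤ p.2 ∧ p.2 ≤ p.1 + l / w} with hS
  set g : ℝ × ℝ → ℝ × ℝ := fun p => ((p.2 - p.1) * w, p.2) with hg
  have hgc : Continuous g := by fun_prop
  have h1 : ∫ p, F p ∂(Tb w l μ) = ∫ p, S.indicator (F ∘ g) p ∂(μ.prod volume) := by
    rw [Tb, integral_map (measgb w).aemeasurable hFc.aestronglyMeasurable,
      ← integral_indicator (measSb w l)]
    rfl
  have hint : Integrable (S.indicator (F ∘ g)) (μ.prod volume) := by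
    have hind : Integrable (S.indicator (fun _ => C)) (μ.prod volume) := by
      rw [integrable_indicator_iff (measSb w l)]
      exact integrableOn_const (Sb_finite w l μ)
    apply Integrable.mono' hind
    · exact ((hFc.comp hgc).aestronglyMeasurable).indicator (measSb w l)
    · apply Filter.Eventually.of_forall
      intro p
      by_cases hp : p ∈ S
      · simp only [Set.indicator_of_mem hp]
        exact hC (g p)
      · simp [Set.indicator_of_notMem hp]
  have h2 : ∫ p, S.indicator (F ∘ g) p ∂(μ.prod volume)
      = ∫ s, ∫ t, S.indicator (F ∘ g) (s, t) ∂volume ∂μ := integral_prod _ hint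
  have h3 : ∀ s : ℝ, ∫ t, S.indicator (F ∘ g) (s, t) ∂volume
      = φ (l, s + l / w) - φ (0, s) := by
    intro s
    have hθ : s ≤ s + l / w := by
      have : 0 < l / w := div_pos hl hw
      linarith
    have e1 : (fun t => S.indicator (F ∘ g) (s, t))
        = (Set.Icc s (s + l / w)).indicator (fun t => F ((t - s) * w, t)) := by
      funext t
      by_cases ht : t ∈ Set.Icc s (s + l / w)
      · rw [Set.indicator_of_mem ht]
        have : (s, t) ∈ S := by simpa [hS, Set.mem_Icc] using ht
        rw [Set.indicator_of_mem this]; rfl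
      · rw [Set.indicator_of_notMem ht]
        have : (s, t) ∉ S := by simpa [hS, Set.mem_Icc] using ht
        rw [Set.indicator_of_notMem this]
    rw [e1, integral_indicator measurableSet_Icc,
      MeasureTheory.integral_Icc_eq_integral_Ioc,
      ← intervalIntegral.integral_of_le hθ]
    have hFTC : ∫ t in s..(s + l / w), F ((t - s) * w, t)
        = φ ((s + l / w - s) * w, s + l / w) - φ ((s - s) * w, s) := by
      apply intervalIntegral.integral_eq_sub_of_hasDerivAt (f := fun t => φ ((t - s) * w, t))
      · intro t _
        have hinner : HasDerivAt (fun t : ℝ => ((t - s) * w, t)) ((w, 1) : ℝ × ℝ) t := by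
          have ha : HasDerivAt (fun t : ℝ => (t - s) * w) w t := by
            simpa using (((hasDerivAt_id t).sub_const s).mul_const w)
          exact ha.prodMk (hasDerivAt_id t)
        have hout : HasFDerivAt φ (fderiv ℝ φ ((t - s) * w, t)) ((t - s) * w, t) :=
          (hφ.differentiable one_ne_zero ((t - s) * w, t)).hasFDerivAt
        have hcomp : HasDerivAt (fun t : ℝ => φ ((t - s) * w, t))
            (fderiv ℝ φ ((t - s) * w, t) (w, 1)) t :=
          HasFDerivAt.comp_hasDerivAt (f := fun t : ℝ => ((t - s) * w, t)) t hout hinner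
        simpa [hF, fderiv_dir hφ] using hcomp
      · exact (hFc.comp (by fun_prop : Continuous fun t : ℝ => ((t - s) * w, t))).intervalIntegrable _ _
    rw [hFTC]
    have e2 : (s + l / w - s) * w = l := by field_simp; ring
    have e3 : (s - s) * w = 0 := by ring
    rw [e2, e3]
  obtain ⟨Cφ, hCφ⟩ := phi_bdd hφ hφc
  have hint1 : Integrable (fun s => φ (l, s + l / w)) μ :=
    integrable_of_bdd ((hφ.continuous.comp (by fun_prop)).aestronglyMeasurable)
      (fun s => hCφ _)
  have hint2 : Integrable (fun s => φ (0, s)) μ :=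
    integrable_of_bdd ((hφ.continuous.comp (by fun_prop)).aestronglyMeasurable)
      (fun s => hCφ _)
  rw [h1, h2]
  rw [integral_congr_ae (Filter.Eventually.of_forall h3), integral_sub hint1 hint2]

lemma weak_identity (w l : ℝ) (hw : 0 < w) (hl : 0 < l)
    (μ₀ μin μb μa : Measure ℝ)
    [IsFiniteMeasure μ₀] [IsFiniteMeasure μin] [IsFiniteMeasure μb] [IsFiniteMeasure μa]
    (hμ₀ : μ₀ ((Set.Icc (0 : ℝ) l)ᶜ) = 0)
    (hμa_le : μa ≤ Measure.map (fun y => (l - y) / w) μ₀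
        + Measure.map (fun s => s + l / w) (μin + μb))
    (φ : ℝ × ℝ → ℝ) (hφ : ContDiff ℝ 1 φ) (hφc : HasCompactSupport φ) :
    ∫ p, (fderiv ℝ φ p (0, 1) + w * fderiv ℝ φ p (1, 0))
        ∂(T0 w l μ₀ + Tb w l μin + Tb w l μb)
      + ∫ y, φ (y, 0) ∂μ₀
      + ∫ s, φ (0, s) ∂(μin + μb)
      - ∫ s, φ (l, s)
          ∂((Measure.map (fun y => (l - y) / w) μ₀
              + Measure.map (fun s => s + l / w) (μin + μb)) - μa)
      - ∫ s, φ (l, s) ∂μa = 0 := by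
  set F : ℝ × ℝ → ℝ := fun p => fderiv ℝ φ p (0, 1) + w * fderiv ℝ φ p (1, 0) with hF
  obtain ⟨C, hC⟩ := F_bdd hφ hφc (w := w)
  have hFc : Continuous F := F_cont hφ
  obtain ⟨Cφ, hCφ⟩ := phi_bdd hφ hφc
  set A : Measure ℝ := Measure.map (fun y => (l - y) / w) μ₀
      + Measure.map (fun s => s + l / w) (μin + μb) with hA
  have hθmeas : Measurable (fun y : ℝ => (l - y) / w) :=
    (measurable_const.sub measurable_id).div_const w
  have hσmeas : Measurable (fun s : ℝ => s + l / w) := measurable_id.add_const _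
  -- finiteness instances
  have i1 : IsFiniteMeasure (T0 w l μ₀) := T0_finite w l hw μ₀ hμ₀
  have i2 : IsFiniteMeasure (Tb w l μin) := Tb_finite w l μin
  have i3 : IsFiniteMeasure (Tb w l μb) := Tb_finite w l μb
  have iA : IsFiniteMeasure A := by
    have h1 : IsFiniteMeasure (Measure.map (fun y : ℝ => (l - y) / w) μ₀) :=
      Measure.isFiniteMeasure_map μ₀ _
    have h2 : IsFiniteMeasure (Measure.map (fun s : ℝ => s + l / w) (μin + μb)) :=
      Measure.isFiniteMeasure_map _ _
    exact MeasureTheory.isFiniteMeasureAdd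
  have iAsub : IsFiniteMeasure (A - μa) :=
    MeasureTheory.isFiniteMeasure_of_le A (Measure.sub_le)
  -- integrability of F w.r.t. the finite pieces
  have hFint : ∀ (ν : Measure (ℝ × ℝ)) [IsFiniteMeasure ν], Integrable F ν := by
    intro ν _
    exact integrable_of_bdd hFc.aestronglyMeasurable hC
  -- split interior integral
  have hsplit : ∫ p, F p ∂(T0 w l μ₀ + Tb w l μin + Tb w l μb)
      = ∫ p, F p ∂(T0 w l μ₀) + ∫ p, F p ∂(Tb w l μin) + ∫ p, F p ∂(Tb w l μb) := by
    rw [integral_add_measure (hFint _) (hFint _), integral_add_measure (hFint _) (hFint _)]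
  -- boundary at l
  have hbd : Integrable (fun s => φ (l, s)) (A - μa) ∧ Integrable (fun s => φ (l, s)) μa := by
    constructor <;>
      exact integrable_of_bdd ((hφ.continuous.comp (by fun_prop)).aestronglyMeasurable)
        (fun s => hCφ _)
  have hsub : ∫ s, φ (l, s) ∂(A - μa) + ∫ s, φ (l, s) ∂μa = ∫ s, φ (l, s) ∂A := by
    rw [← integral_add_measure hbd.1 hbd.2, Measure.sub_add_cancel_of_le hμa_le]
  -- A integral splits
  have hmap0 : ∫ s, φ (l, s) ∂(Measure.map (fun y : ℝ => (l - y) / w) μ₀)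
      = ∫ y, φ (l, (l - y) / w) ∂μ₀ :=
    integral_map hθmeas.aemeasurable ((hφ.continuous.comp (by fun_prop)).aestronglyMeasurable)
  have hmapin : ∀ (μ : Measure ℝ), ∫ s, φ (l, s) ∂(Measure.map (fun s : ℝ => s + l / w) μ)
      = ∫ s, φ (l, s + l / w) ∂μ := fun μ =>
    integral_map hσmeas.aemeasurable ((hφ.continuous.comp (by fun_prop)).aestronglyMeasurable)
  have hint_l : ∀ (μ : Measure ℝ) [IsFiniteMeasure μ], Integrable (fun s => φ (l, s + l/w)) μ := by
    intro μ _
    exact integrable_of_bdd ((hφ.continuous.comp (by fun_prop)).aestronglyMeasurable)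
      (fun s => hCφ _)
  have hint_0 : ∀ (μ : Measure ℝ) [IsFiniteMeasure μ], Integrable (fun s => φ (0, s)) μ := by
    intro μ _
    exact integrable_of_bdd ((hφ.continuous.comp (by fun_prop)).aestronglyMeasurable)
      (fun s => hCφ _)
  have hφl : ∀ (μ : Measure ℝ) [IsFiniteMeasure μ], Integrable (fun s => φ (l, s)) μ := by
    intro μ _
    exact integrable_of_bdd ((hφ.continuous.comp (by fun_prop)).aestronglyMeasurable)
      (fun s => hCφ _)
  have hAsplit : ∫ s, φ (l, s) ∂A
      = ∫ y, φ (l, (l - y) / w) ∂μ₀ + ∫ s, φ (l, s + l / w) ∂μin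
        + ∫ s, φ (l, s + l / w) ∂μb := by
    have h2 : IsFiniteMeasure (Measure.map (fun s : ℝ => s + l / w) (μin + μb)) :=
      Measure.isFiniteMeasure_map _ _
    have h1 : IsFiniteMeasure (Measure.map (fun y : ℝ => (l - y) / w) μ₀) :=
      Measure.isFiniteMeasure_map _ _
    rw [hA]
    rw [integral_add_measure (hφl _) (hφl _), hmap0, hmapin,
      integral_add_measure (hint_l μin) (hint_l μb)]
    ring
  have hin0 : ∫ s, φ (0, s) ∂(μin + μb) = ∫ s, φ (0, s) ∂μin + ∫ s, φ (0, s) ∂μb :=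
    integral_add_measure (hint_0 μin) (hint_0 μb)
  rw [hsplit, integral_T0 w l hw μ₀ hμ₀ φ hφ hφc, integral_Tb w l hw hl μin φ hφ hφc,
    integral_Tb w l hw hl μb φ hφ hφc, hin0]
  have := hsub
  rw [hAsplit] at this
  linarith [this]

/-! ### Plateau functions -/

noncomputable def plat (a b ε : ℝ) : ℝ → ℝ := fun x =>
  Real.smoothTransition ((x - a + ε) / ε) * Real.smoothTransition ((b + ε - x) / ε)

lemma plat_contDiff (a b ε : ℝ) : ContDiff ℝ 1 (plat a b ε) := by
  apply ContDiff.mul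
  · exact Real.smoothTransition.contDiff.comp
      (((contDiff_id.sub contDiff_const).add contDiff_const).div_const ε)
  · exact Real.smoothTransition.contDiff.comp
      (((contDiff_const.add contDiff_const).sub contDiff_id).div_const ε)

lemma plat_zero (a b ε : ℝ) (hε : 0 < ε) {x : ℝ} (hx : x ≤ a - ε ∨ b + ε ≤ x) :
    plat a b ε x = 0 := by
  rcases hx with hx | hx
  · have : (x - a + ε) / ε ≤ 0 := div_nonpos_of_nonpos_of_nonneg (by linarith) hε.le
    simp [plat, Real.smoothTransition.zero_of_nonpos this]
  · have : (b + ε - x) / ε ≤ 0 := div_nonpos_of_nonpos_of_nonneg (by linarith) hε.le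
    simp [plat, Real.smoothTransition.zero_of_nonpos this]

lemma plat_cs (a b ε : ℝ) (hε : 0 < ε) : HasCompactSupport (plat a b ε) := by
  apply HasCompactSupport.intro (isCompact_Icc (a := a - ε) (b := b + ε))
  intro x hx
  simp only [Set.mem_Icc, not_and_or, not_le] at hx
  exact plat_zero a b ε hε (by rcases hx with h | h; exacts [Or.inl h.le, Or.inr h.le])

lemma plat_one (a b ε : ℝ) (hε : 0 < ε) {x : ℝ} (hx : x ∈ Set.Icc a b) :
    plat a b ε x = 1 := by
  have h1 : (1 : ℝ) ≤ (x - a + ε) / ε := by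
    rw [le_div_iff₀ hε]; linarith [hx.1]
  have h2 : (1 : ℝ) ≤ (b + ε - x) / ε := by
    rw [le_div_iff₀ hε]; linarith [hx.2]
  simp [plat, Real.smoothTransition.one_of_one_le h1, Real.smoothTransition.one_of_one_le h2]

lemma plat_mem (a b ε x : ℝ) : plat a b ε x ∈ Set.Icc (0:ℝ) 1 := by
  constructor
  · exact mul_nonneg (Real.smoothTransition.nonneg _) (Real.smoothTransition.nonneg _)
  · calc Real.smoothTransition ((x - a + ε) / ε) * Real.smoothTransition ((b + ε - x) / ε)
        ≤ 1 * 1 := by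
          apply mul_le_mul (Real.smoothTransition.le_one _) (Real.smoothTransition.le_one _)
            (Real.smoothTransition.nonneg _) zero_le_one
      _ = 1 := one_mul 1

lemma plat_tendsto (a b x : ℝ) :
    Filter.Tendsto (fun n : ℕ => plat a b (1 / (n + 1)) x) Filter.atTop
      (nhds ((Set.Icc a b).indicator (fun _ => (1:ℝ)) x)) := by
  by_cases hx : x ∈ Set.Icc a b
  · rw [Set.indicator_of_mem hx]
    have : ∀ n : ℕ, plat a b (1 / (n + 1)) x = 1 := fun n =>
      plat_one a b _ (by positivity) hx
    simp only [this]
    exact tendsto_const_nhds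
  · rw [Set.indicator_of_notMem hx]
    apply Filter.Tendsto.congr' ?_ tendsto_const_nhds
    have hd : 0 < if x < a then a - x else x - b := by
      simp only [Set.mem_Icc, not_and_or, not_le] at hx
      split_ifs with h
      · linarith
      · rcases hx with h' | h'
        · exact absurd h' h
        · linarith
    have : ∀ᶠ n : ℕ in Filter.atTop, (1 : ℝ) / (n + 1) ≤ (if x < a then a - x else x - b) := by
      have := tendsto_one_div_add_atTop_nhds_zero_nat (𝕜 := ℝ)
      exact this.eventually_le_const hd
    filter_upwards [this] with n hn
    symm
    apply plat_zero a b _ (by positivity)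
    simp only [Set.mem_Icc, not_and_or, not_le] at hx
    split_ifs at hn with h
    · left; linarith
    · rcases hx with h' | h'
      · exact absurd h' h
      · right; linarith

/-! ### Separated test functions -/

lemma sep_test (w l : ℝ) (hw : 0 < w) (ν₁ ν₂ : Measure (ℝ × ℝ))
    [IsFiniteMeasure ν₁] [IsFiniteMeasure ν₂]
    (hs1 : ν₁ ((Set.Icc (0 : ℝ) l ×ˢ Set.Ici (0 : ℝ))ᶜ) = 0)
    (hs2 : ν₂ ((Set.Icc (0 : ℝ) l ×ˢ Set.Ici (0 : ℝ))ᶜ) = 0)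
    (heq : ∀ φ : ℝ × ℝ → ℝ, ContDiff ℝ 1 φ → HasCompactSupport φ →
      ∫ p, (fderiv ℝ φ p (0, 1) + w * fderiv ℝ φ p (1, 0)) ∂ν₁
        = ∫ p, (fderiv ℝ φ p (0, 1) + w * fderiv ℝ φ p (1, 0)) ∂ν₂)
    (g k : ℝ → ℝ) (hg : ContDiff ℝ 1 g) (hgc : HasCompactSupport g)
    (hk : Continuous k) (hkc : HasCompactSupport k) :
    ∫ p, g (p.1 - w * p.2) * k p.2 ∂ν₁ = ∫ p, g (p.1 - w * p.2) * k p.2 ∂ν₂ := by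
  obtain ⟨r, hr⟩ := hkc.isCompact.isBounded.subset_closedBall 0
  set T : ℝ := r + 1 with hT
  have hk0 : ∀ u : ℝ, r < u → k u = 0 := by
    intro u hu
    apply image_eq_zero_of_notMem_tsupport
    intro hmem
    have := hr hmem
    rw [Real.closedBall_eq_Icc] at this
    simp only [Set.mem_Icc, zero_sub, zero_add] at this
    linarith [this.2]
  set H : ℝ → ℝ := fun t => ∫ u in T..t, k u with hHdef
  have hH : ∀ t, HasDerivAt H (k t) t := fun t =>
    intervalIntegral.integral_hasDerivAt_right (hk.intervalIntegrable _ _)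
      (hk.stronglyMeasurable.stronglyMeasurableAtFilter) hk.continuousAt
  have hH1 : ContDiff ℝ 1 H := by
    rw [contDiff_one_iff_deriv]
    refine ⟨fun t => (hH t).differentiableAt, ?_⟩
    have : deriv H = k := funext fun t => (hH t).deriv
    rw [this]; exact hk
  have hHT : ∀ t, T ≤ t → H t = 0 := by
    intro t ht
    show (∫ u in T..t, k u) = 0
    rw [intervalIntegral.integral_congr (g := fun _ => (0:ℝ)) ?_, intervalIntegral.integral_zero]
    intro u hu
    rw [Set.uIcc_of_le ht] at hu
    exact hk0 u (by simp only [hT] at hu ⊢; linarith [hu.1])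
  set χ : ℝ → ℝ := fun t => Real.smoothTransition (2 * t + 2) with hχdef
  have hχ1 : ContDiff ℝ 1 χ :=
    Real.smoothTransition.contDiff.comp ((contDiff_const.mul contDiff_id).add contDiff_const)
  have hχ0 : ∀ t : ℝ, t ≤ -1 → χ t = 0 := fun t ht =>
    Real.smoothTransition.zero_of_nonpos (by linarith)
  have hχone : ∀ t : ℝ, -1/2 ≤ t → χ t = 1 := fun t ht =>
    Real.smoothTransition.one_of_one_le (by linarith)
  set m : ℝ → ℝ := fun t => H t * χ t with hmdef
  set φ : ℝ × ℝ → ℝ := fun p => g (p.1 - w * p.2) * m p.2 with hφdef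
  have hφ1 : ContDiff ℝ 1 φ := by
    apply ContDiff.mul
    · exact hg.comp (contDiff_fst.sub (contDiff_const.mul contDiff_snd))
    · exact (hH1.mul hχ1).comp contDiff_snd
  have hφc : HasCompactSupport φ := by
    apply HasCompactSupport.intro
      (((hgc.isCompact).prod (isCompact_Icc (a := (-1:ℝ)) (b := T))).image
        (show Continuous (fun q : ℝ × ℝ => (q.1 + w * q.2, q.2)) by fun_prop))
    intro p hp
    by_cases ht : p.2 ∈ Set.Icc (-1 : ℝ) T
    · by_cases hgmem : p.1 - w * p.2 ∈ tsupport g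
      · exfalso
        apply hp
        exact ⟨(p.1 - w * p.2, p.2), ⟨hgmem, ht⟩, by simp [Prod.ext_iff]⟩
      · rw [hφdef]
        simp [image_eq_zero_of_notMem_tsupport hgmem]
    · simp only [Set.mem_Icc, not_and_or, not_le] at ht
      rcases ht with ht | ht
      · rw [hφdef]; simp [hmdef, hχ0 p.2 (by linarith)]
      · rw [hφdef]; simp [hmdef, hHT p.2 (by linarith)]
  have hDφ : ∀ p : ℝ × ℝ, 0 ≤ p.2 →
      fderiv ℝ φ p (0, 1) + w * fderiv ℝ φ p (1, 0) = g (p.1 - w * p.2) * k p.2 := by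
    rintro ⟨x, t⟩ ht
    have hm : HasDerivAt m (k t) t := by
      have hev : m =ᶠ[nhds t] H := by
        apply Filter.eventually_of_mem (isOpen_Ioi.mem_nhds (show (-1/2 : ℝ) < t by linarith))
        intro u hu
        simp only [hmdef, hχone u (le_of_lt hu)]
        ring
      exact (Filter.EventuallyEq.hasDerivAt_iff hev).mpr (hH t)
    set Lu : (ℝ × ℝ) →L[ℝ] ℝ :=
      ContinuousLinearMap.fst ℝ ℝ ℝ - w • ContinuousLinearMap.snd ℝ ℝ ℝ with hLu
    have hLuapp : ∀ q : ℝ × ℝ, Lu q = q.1 - w * q.2 := by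
      intro q
      simp [hLu, ContinuousLinearMap.sub_apply, ContinuousLinearMap.smul_apply]
    have hu : HasFDerivAt (fun p : ℝ × ℝ => p.1 - w * p.2) Lu (x, t) := by
      have : (fun p : ℝ × ℝ => p.1 - w * p.2) = ⇑Lu := by
        funext q; rw [hLuapp]
      rw [this]
      exact Lu.hasFDerivAt
    have hgd : HasDerivAt g (deriv g (x - w * t)) (x - w * t) :=
      ((hg.differentiable one_ne_zero) _).hasDerivAt
    have hc1 : HasFDerivAt (fun p : ℝ × ℝ => g (p.1 - w * p.2))
        (deriv g (x - w * t) • Lu) (x, t) := hgd.comp_hasFDerivAt (x, t) hu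
    have hc2 : HasFDerivAt (fun p : ℝ × ℝ => m p.2)
        (k t • ContinuousLinearMap.snd ℝ ℝ ℝ) (x, t) :=
      hm.comp_hasFDerivAt (f := fun p : ℝ × ℝ => p.2) (x, t) (hasFDerivAt_snd (𝕜 := ℝ) (p := (x, t)))
    have hmul : HasFDerivAt φ
        (g ((x, t).1 - w * (x, t).2) • (k t • ContinuousLinearMap.snd ℝ ℝ ℝ)
          + m ((x, t).2) • (deriv g (x - w * t) • Lu)) (x, t) := hc1.mul hc2
    rw [hmul.fderiv]
    simp only [ContinuousLinearMap.add_apply, ContinuousLinearMap.smul_apply,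
      ContinuousLinearMap.coe_snd', hLu, ContinuousLinearMap.sub_apply,
      ContinuousLinearMap.coe_fst', smul_eq_mul]
    ring
  have key := heq φ hφ1 hφc
  have e1 : ∫ p, (fderiv ℝ φ p (0, 1) + w * fderiv ℝ φ p (1, 0)) ∂ν₁
      = ∫ p, g (p.1 - w * p.2) * k p.2 ∂ν₁ := by
    apply integral_congr_ae
    filter_upwards [ae_mem_of_compl_null hs1] with p hp
    exact hDφ p hp.2
  have e2 : ∫ p, (fderiv ℝ φ p (0, 1) + w * fderiv ℝ φ p (1, 0)) ∂ν₂
      = ∫ p, g (p.1 - w * p.2) * k p.2 ∂ν₂ := by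
    apply integral_congr_ae
    filter_upwards [ae_mem_of_compl_null hs2] with p hp
    exact hDφ p hp.2
  rw [← e1, ← e2, key]

/-! ### Shear -/

def shearH (w : ℝ) : Homeomorph (ℝ × ℝ) (ℝ × ℝ) where
  toFun := fun p => (p.1 - w * p.2, p.2)
  invFun := fun q => (q.1 + w * q.2, q.2)
  left_inv := by intro p; simp [Prod.ext_iff]
  right_inv := by intro q; simp [Prod.ext_iff]
  continuous_toFun := by fun_prop
  continuous_invFun := by fun_prop

noncomputable def shearE (w : ℝ) : (ℝ × ℝ) ≃ᵐ (ℝ × ℝ) := (shearH w).toMeasurableEquiv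

lemma iic_spanning : IsCountablySpanning (Set.range (Set.Iic : ℝ → Set ℝ)) := by
  refine ⟨fun n => Set.Iic (n : ℝ), fun n => ⟨n, rfl⟩, ?_⟩
  ext x
  simp only [Set.mem_iUnion, Set.mem_Iic, Set.mem_univ, iff_true]
  exact exists_nat_ge x

lemma gen_prod_iic : (inferInstance : MeasurableSpace (ℝ × ℝ))
    = MeasurableSpace.generateFrom
        (Set.image2 (· ×ˢ ·) (Set.range (Set.Iic : ℝ → Set ℝ))
          (Set.range (Set.Iic : ℝ → Set ℝ))) := by
  have h : (Real.measurableSpace)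
      = MeasurableSpace.generateFrom (Set.range (Set.Iic : ℝ → Set ℝ)) := by
    exact borel_eq_generateFrom_Iic ℝ
  show @Prod.instMeasurableSpace ℝ ℝ _ _ = _
  rw [h]
  exact generateFrom_prod_eq iic_spanning iic_spanning

lemma measures_eq (w l : ℝ) (hw : 0 < w) (ν₁ ν₂ : Measure (ℝ × ℝ))
    [IsFiniteMeasure ν₁] [IsFiniteMeasure ν₂]
    (hs1 : ν₁ ((Set.Icc (0 : ℝ) l ×ˢ Set.Ici (0 : ℝ))ᶜ) = 0)
    (hs2 : ν₂ ((Set.Icc (0 : ℝ) l ×ˢ Set.Ici (0 : ℝ))ᶜ) = 0)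
    (heq : ∀ φ : ℝ × ℝ → ℝ, ContDiff ℝ 1 φ → HasCompactSupport φ →
      ∫ p, (fderiv ℝ φ p (0, 1) + w * fderiv ℝ φ p (1, 0)) ∂ν₁
        = ∫ p, (fderiv ℝ φ p (0, 1) + w * fderiv ℝ φ p (1, 0)) ∂ν₂) :
    ν₁ = ν₂ := by
  set e := shearE w with he
  set ρ₁ : Measure (ℝ × ℝ) := Measure.map e ν₁ with hρ₁
  set ρ₂ : Measure (ℝ × ℝ) := Measure.map e ν₂ with hρ₂
  have i1 : IsFiniteMeasure ρ₁ := Measure.isFiniteMeasure_map ν₁ e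
  have i2 : IsFiniteMeasure ρ₂ := Measure.isFiniteMeasure_map ν₂ e
  have hgk : ∀ g k : ℝ → ℝ, ContDiff ℝ 1 g → HasCompactSupport g →
      Continuous k → HasCompactSupport k →
      ∫ q, g q.1 * k q.2 ∂ρ₁ = ∫ q, g q.1 * k q.2 ∂ρ₂ := by
    intro g k hg hgc hk hkc
    have hcont : Continuous (fun q : ℝ × ℝ => g q.1 * k q.2) :=
      (hg.continuous.comp continuous_fst).mul (hk.comp continuous_snd)
    rw [hρ₁, hρ₂, integral_map e.measurable.aemeasurable hcont.aestronglyMeasurable,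
      integral_map e.measurable.aemeasurable hcont.aestronglyMeasurable]
    exact sep_test w l hw ν₁ ν₂ hs1 hs2 heq g k hg hgc hk hkc
  -- rectangles
  have hrect : ∀ a b c d : ℝ, ρ₁ (Set.Icc a b ×ˢ Set.Icc c d) = ρ₂ (Set.Icc a b ×ˢ Set.Icc c d) := by
    intro a b c d
    set Fn : ℕ → ℝ × ℝ → ℝ :=
      fun n p => plat a b (1 / (n + 1)) p.1 * plat c d (1 / (n + 1)) p.2 with hFn
    set f : ℝ × ℝ → ℝ := (Set.Icc a b ×ˢ Set.Icc c d).indicator (fun _ => (1:ℝ)) with hf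
    have hmeas : MeasurableSet (Set.Icc a b ×ˢ Set.Icc c d) :=
      measurableSet_Icc.prod measurableSet_Icc
    have hFneq : ∀ n, ∫ p, Fn n p ∂ρ₁ = ∫ p, Fn n p ∂ρ₂ := fun n =>
      hgk _ _ (plat_contDiff a b _) (plat_cs a b _ (by positivity))
        (plat_contDiff c d _).continuous (plat_cs c d _ (by positivity))
    have hlim : ∀ (ρ : Measure (ℝ × ℝ)) [IsFiniteMeasure ρ],
        Filter.Tendsto (fun n => ∫ p, Fn n p ∂ρ) Filter.atTop (nhds (∫ p, f p ∂ρ)) := by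
      intro ρ _
      apply MeasureTheory.tendsto_integral_of_dominated_convergence (bound := fun _ => (1:ℝ))
      · intro n
        exact (((plat_contDiff a b _).continuous.comp continuous_fst).mul
          ((plat_contDiff c d _).continuous.comp continuous_snd)).aestronglyMeasurable
      · exact integrable_const 1
      · intro n
        apply Filter.Eventually.of_forall
        intro p
        simp only [hFn]
        have h1 := plat_mem a b (1 / (n + 1)) p.1
        have h2 := plat_mem c d (1 / (n + 1)) p.2
        rw [Real.norm_eq_abs, abs_le]
        constructor
        · linarith [mul_nonneg h1.1 h2.1]
        · nlinarith [h1.1, h1.2, h2.1, h2.2]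
      · apply Filter.Eventually.of_forall
        intro p
        simp only [hFn, hf]
        have hind : (Set.Icc a b ×ˢ Set.Icc c d).indicator (fun _ => (1:ℝ)) p
            = (Set.Icc a b).indicator (fun _ => (1:ℝ)) p.1
              * (Set.Icc c d).indicator (fun _ => (1:ℝ)) p.2 := by
          by_cases hx : p.1 ∈ Set.Icc a b <;> by_cases hy : p.2 ∈ Set.Icc c d
          · rw [Set.indicator_of_mem (Set.mem_prod.mpr ⟨hx, hy⟩), Set.indicator_of_mem hx,
              Set.indicator_of_mem hy]
            norm_num
          · rw [Set.indicator_of_notMem (fun h => hy (Set.mem_prod.mp h).2),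
              Set.indicator_of_notMem hy, mul_zero]
          · rw [Set.indicator_of_notMem (fun h => hx (Set.mem_prod.mp h).1),
              Set.indicator_of_notMem hx, zero_mul]
          · rw [Set.indicator_of_notMem (fun h => hx (Set.mem_prod.mp h).1),
              Set.indicator_of_notMem hx, zero_mul]
        rw [hind]
        exact (plat_tendsto a b p.1).mul (plat_tendsto c d p.2)
    have hfint : ∀ (ρ : Measure (ℝ × ℝ)) [IsFiniteMeasure ρ],
        ∫ p, f p ∂ρ = (ρ (Set.Icc a b ×ˢ Set.Icc c d)).toReal := by
      intro ρ _
      rw [hf, integral_indicator_const (1:ℝ) hmeas]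
      simp [Measure.real]
    have := tendsto_nhds_unique ((hlim ρ₁).congr (fun n => hFneq n)) (hlim ρ₂)
    rw [hfint ρ₁, hfint ρ₂] at this
    exact (ENNReal.toReal_eq_toReal_iff' (measure_ne_top _ _) (measure_ne_top _ _)).mp this
  -- Iic rectangles
  have hIic : ∀ a b : ℝ, ρ₁ (Set.Iic a ×ˢ Set.Iic b) = ρ₂ (Set.Iic a ×ˢ Set.Iic b) := by
    intro a b
    set s : ℕ → Set (ℝ × ℝ) := fun n => Set.Icc (-(n:ℝ)) a ×ˢ Set.Icc (-(n:ℝ)) b with hsdef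
    have hmono : Monotone s := by
      intro n m hnm
      apply Set.prod_mono <;>
        exact Set.Icc_subset_Icc (by simp; exact_mod_cast hnm) le_rfl
    have hunion : (⋃ n, s n) = Set.Iic a ×ˢ Set.Iic b := by
      ext ⟨x, y⟩
      simp only [hsdef, Set.mem_iUnion, Set.mem_prod, Set.mem_Icc, Set.mem_Iic]
      constructor
      · rintro ⟨n, ⟨_, hxa⟩, _, hyb⟩
        exact ⟨hxa, hyb⟩
      · rintro ⟨hxa, hyb⟩
        obtain ⟨n, hn⟩ := exists_nat_ge (max (-x) (-y))
        exact ⟨n, ⟨by linarith [le_trans (le_max_left (-x) (-y)) hn], hxa⟩,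
          by linarith [le_trans (le_max_right (-x) (-y)) hn], hyb⟩
    have t1 := tendsto_measure_iUnion_atTop (μ := ρ₁) hmono
    have t2 := tendsto_measure_iUnion_atTop (μ := ρ₂) hmono
    rw [hunion] at t1 t2
    have t1' : Filter.Tendsto (⇑ρ₂ ∘ s) Filter.atTop (nhds (ρ₁ (Set.Iic a ×ˢ Set.Iic b))) := by
      apply t1.congr
      intro n
      exact hrect (-(n:ℝ)) a (-(n:ℝ)) b
    exact tendsto_nhds_unique t1' t2
  have huniv : ρ₁ Set.univ = ρ₂ Set.univ := by
    set s : ℕ → Set (ℝ × ℝ) := fun n => Set.Icc (-(n:ℝ)) (n:ℝ) ×ˢ Set.Icc (-(n:ℝ)) (n:ℝ) with hsdef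
    have hmono : Monotone s := by
      intro n m hnm
      apply Set.prod_mono <;>
        exact Set.Icc_subset_Icc (by simp; exact_mod_cast hnm) (by exact_mod_cast hnm)
    have hunion : (⋃ n, s n) = Set.univ := by
      ext ⟨x, y⟩
      simp only [hsdef, Set.mem_iUnion, Set.mem_prod, Set.mem_Icc, Set.mem_univ, iff_true]
      obtain ⟨n, hn⟩ := exists_nat_ge (max (max x (-x)) (max y (-y)))
      refine ⟨n, ⟨?_, ?_⟩, ?_, ?_⟩ <;>
        [linarith [le_trans (le_trans (le_max_right x (-x)) (le_max_left _ _)) hn];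
         linarith [le_trans (le_trans (le_max_left x (-x)) (le_max_left _ _)) hn];
         linarith [le_trans (le_trans (le_max_right y (-y)) (le_max_right _ _)) hn];
         linarith [le_trans (le_trans (le_max_left y (-y)) (le_max_right _ _)) hn]]
    have t1 := tendsto_measure_iUnion_atTop (μ := ρ₁) hmono
    have t2 := tendsto_measure_iUnion_atTop (μ := ρ₂) hmono
    rw [hunion] at t1 t2
    have t1' : Filter.Tendsto (⇑ρ₂ ∘ s) Filter.atTop (nhds (ρ₁ Set.univ)) := by
      apply t1.congr
      intro n
      exact hrect (-(n:ℝ)) (n:ℝ) (-(n:ℝ)) (n:ℝ)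
    exact tendsto_nhds_unique t1' t2
  have hρ : ρ₁ = ρ₂ := by
    apply MeasureTheory.ext_of_generate_finite
      (Set.image2 (· ×ˢ ·) (Set.range (Set.Iic : ℝ → Set ℝ)) (Set.range (Set.Iic : ℝ → Set ℝ)))
      gen_prod_iic (isPiSystem_Iic.prod isPiSystem_Iic) ?_ huniv
    rintro S ⟨s, ⟨a, rfl⟩, t, ⟨b, rfl⟩, rfl⟩
    exact hIic a b
  exact MeasurableEquiv.map_measurableEquiv_injective e hρ

/-- Theorem 3.2 (full statement): `ν = T₀(μ₀) + T_b(μ_in) + T_b(μ_b)` is the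
unique finite Borel measure on `ℝ²`, supported in `[0,l] × [0,∞)`, satisfying
the weak formulation of the tram problem on one edge (Definition 3.4) with
initial datum `μ₀`, inflow `μ_in`, boarding measure `μ_b` and alighting
measure `μ_a`. -/
theorem unique_weak_solution_one_edge (w l : ℝ) (hw : 0 < w) (hl : 0 < l)
    (μ₀ μin μb μa : Measure ℝ)
    [IsFiniteMeasure μ₀] [IsFiniteMeasure μin] [IsFiniteMeasure μb]
    [IsFiniteMeasure μa]
    (hμ₀ : μ₀ ((Set.Icc (0 : ℝ) l)ᶜ) = 0)
    (hμin : μin ((Set.Ici (0 : ℝ))ᶜ) = 0)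
    (hμb : μb ((Set.Ici (0 : ℝ))ᶜ) = 0)
    (hμa : μa ((Set.Ici (0 : ℝ))ᶜ) = 0)
    (hμa_le : μa ≤ Measure.map (fun y => (l - y) / w) μ₀
        + Measure.map (fun s => s + l / w) (μin + μb)) :
    (IsFiniteMeasure (T0 w l μ₀ + Tb w l μin + Tb w l μb) ∧
      (T0 w l μ₀ + Tb w l μin + Tb w l μb)
        ((Set.Icc (0 : ℝ) l ×ˢ Set.Ici (0 : ℝ))ᶜ) = 0 ∧
      ∀ φ : ℝ × ℝ → ℝ, ContDiff ℝ 1 φ → HasCompactSupport φ →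
        ∫ p, (fderiv ℝ φ p (0, 1) + w * fderiv ℝ φ p (1, 0))
            ∂(T0 w l μ₀ + Tb w l μin + Tb w l μb)
          + ∫ y, φ (y, 0) ∂μ₀
          + ∫ s, φ (0, s) ∂(μin + μb)
          - ∫ s, φ (l, s)
              ∂((Measure.map (fun y => (l - y) / w) μ₀
                  + Measure.map (fun s => s + l / w) (μin + μb)) - μa)
          - ∫ s, φ (l, s) ∂μa = 0) ∧
    (∀ ν' : Measure (ℝ × ℝ), IsFiniteMeasure ν' →
      ν' ((Set.Icc (0 : ℝ) l ×ˢ Set.Ici (0 : ℝ))ᶜ) = 0 →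
      (∀ φ : ℝ × ℝ → ℝ, ContDiff ℝ 1 φ → HasCompactSupport φ →
        ∫ p, (fderiv ℝ φ p (0, 1) + w * fderiv ℝ φ p (1, 0)) ∂ν'
          + ∫ y, φ (y, 0) ∂μ₀
          + ∫ s, φ (0, s) ∂(μin + μb)
          - ∫ s, φ (l, s)
              ∂((Measure.map (fun y => (l - y) / w) μ₀
                  + Measure.map (fun s => s + l / w) (μin + μb)) - μa)
          - ∫ s, φ (l, s) ∂μa = 0) →
      ν' = T0 w l μ₀ + Tb w l μin + Tb w l μb) := by
  haveI i1 : IsFiniteMeasure (T0 w l μ₀) := T0_finite w l hw μ₀ hμ₀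
  haveI i2 : IsFiniteMeasure (Tb w l μin) := Tb_finite w l μin
  haveI i3 : IsFiniteMeasure (Tb w l μb) := Tb_finite w l μb
  have hsupp : (T0 w l μ₀ + Tb w l μin + Tb w l μb)
      ((Set.Icc (0 : ℝ) l ×ˢ Set.Ici (0 : ℝ))ᶜ) = 0 := by
    simp only [Measure.add_apply]
    rw [T0_compl w l hw μ₀ hμ₀, Tb_compl w l hw hl μin hμin, Tb_compl w l hw hl μb hμb]
    simp
  refine ⟨⟨inferInstance, hsupp, ?_⟩, ?_⟩
  · intro φ hφ hφc
    exact weak_identity w l hw hl μ₀ μin μb μa hμ₀ hμa_le φ hφ hφc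
  · intro ν' hν'fin hν'supp hν'weak
    haveI := hν'fin
    apply measures_eq w l hw ν' (T0 w l μ₀ + Tb w l μin + Tb w l μb) hν'supp hsupp
    intro φ hφ hφc
    have h1 := hν'weak φ hφ hφc
    have h2 := weak_identity w l hw hl μ₀ μin μb μa hμ₀ hμa_le φ hφ hφc
    linarith
end
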